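/- arXiv:1703.08592 — 3 statements merged into one kernel-verified Lean document; each statement's English description precedes it below -/
import Mathlib

section
/- For all ρ, t > 0 the Sobolev conjugate satisfies min{t^{ℓ*}, t^{m*}}·Φ*(ρ) ≤ Φ*(ρt) ≤ max{t^{ℓ*}, t^{m*}}·Φ*(ρ). -/
open Filter Set MeasureTheory

set_option maxHeartbeats 1000000

lemma aux_rpow_meas (e : ℝ) : Measurable fun x : ℝ => x ^ e := by measurability

lemma aux_mono {s : Set ℝ} (hs : Convex ℝ s) (hs' : s ⊆ Ioi 0) {f f' : ℝ → ℝ}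
    (hd : ∀ x ∈ Ioi (0:ℝ), HasDerivAt f (f' x) x)
    (h0 : ∀ x ∈ interior s, 0 ≤ f' x) : MonotoneOn f s := by
  refine monotoneOn_of_deriv_nonneg hs
    (fun x hx => (hd x (hs' hx)).continuousAt.continuousWithinAt)
    (fun x hx => (hd x (hs' (interior_subset hx))).differentiableAt.differentiableWithinAt)
    (fun x hx => ?_)
  rw [(hd x (hs' (interior_subset hx))).deriv]
  exact h0 x hx

lemma aux_anti {s : Set ℝ} (hs : Convex ℝ s) (hs' : s ⊆ Ioi 0) {f f' : ℝ → ℝ}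
    (hd : ∀ x ∈ Ioi (0:ℝ), HasDerivAt f (f' x) x)
    (h0 : ∀ x ∈ interior s, f' x ≤ 0) : AntitoneOn f s := by
  have := aux_mono hs hs' (f := fun x => -f x) (f' := fun x => -f' x)
    (fun x hx => (hd x hx).neg) (fun x hx => by simpa using h0 x hx)
  intro a ha b hb hab
  have h2 := this ha hb hab
  simpa using h2

lemma aux_ratio_deriv {f f' : ℝ → ℝ} {p : ℝ} {x : ℝ} (hx : 0 < x)
    (hd : HasDerivAt f (f' x) x) :
    HasDerivAt (fun x => f x * x ^ (-p)) ((x * f' x - p * f x) * x ^ (-p - 1)) x := by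
  have h1 := hd.mul (Real.hasDerivAt_rpow_const (x := x) (p := -p) (Or.inl (ne_of_gt hx)))
  have hxx : x ^ (-p) = x * x ^ (-p - 1) := by
    nth_rewrite 1 [show -p = 1 + (-p - 1) by ring]
    rw [Real.rpow_add hx, Real.rpow_one]
  refine h1.congr_deriv ?_
  rw [hxx]
  ring

lemma aux_rpow_tendsto {p : ℝ} (hp : 0 < p) :
    Tendsto (fun ε : ℝ => ε ^ p) (nhdsWithin 0 (Ioi 0)) (nhds 0) := by
  have h := (Real.continuousAt_rpow_const 0 p (Or.inr hp.le)).tendsto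
  have h2 : (0:ℝ) ^ p = 0 := Real.zero_rpow (ne_of_gt hp)
  rw [h2] at h
  exact h.mono_left nhdsWithin_le_nhds

lemma aux_contra {ψ ψ' : ℝ → ℝ} {p c t₀ : ℝ} (hp : 0 < p) (hc : 0 < c) (ht₀ : 0 < t₀)
    (hψd : ∀ x ∈ Ioi (0:ℝ), HasDerivAt ψ (ψ' x) x)
    (hlim : Tendsto ψ (nhdsWithin 0 (Ioi 0)) (nhds 0))
    (hg : ∀ x ∈ Ioc (0:ℝ) t₀, x * ψ' x - p * ψ x ≤ -c) : False := by
  -- D x = ψ x * x^(-p) - (c/p) * x^(-p) is antitone on Ioc 0 t₀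
  have hD : ∀ x ∈ Ioi (0:ℝ), HasDerivAt (fun x => ψ x * x ^ (-p) - (c/p) * x ^ (-p))
      ((x * ψ' x - p * ψ x + c) * x ^ (-p - 1)) x := by
    intro x hx
    have h1 := aux_ratio_deriv (p := p) hx (hψd x hx)
    have h2 := (Real.hasDerivAt_rpow_const (x := x) (p := -p) (Or.inl (ne_of_gt hx))).const_mul (c/p)
    have h3 := h1.sub h2
    refine h3.congr_deriv ?_
    have hp' : p ≠ 0 := ne_of_gt hp
    field_simp
    ring
  have hanti : AntitoneOn (fun x => ψ x * x ^ (-p) - (c/p) * x ^ (-p)) (Ioc 0 t₀) := by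
    refine aux_anti (convex_Ioc 0 t₀) Ioc_subset_Ioi_self hD ?_
    intro x hx
    rw [interior_Ioc] at hx
    have hx' : x ∈ Ioc (0:ℝ) t₀ := Ioo_subset_Ioc_self hx
    have := hg x hx'
    have hxp : (0:ℝ) ≤ x ^ (-p - 1) := Real.rpow_nonneg (le_of_lt hx.1) _
    nlinarith
  set K := ψ t₀ * t₀ ^ (-p) - (c/p) * t₀ ^ (-p) with hK
  have hbound : ∀ ε ∈ Ioc (0:ℝ) t₀, K * ε ^ p + c/p ≤ ψ ε := by
    intro ε hε
    have h1 := hanti hε (right_mem_Ioc.mpr ht₀) hε.2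
    -- K ≤ ψ ε * ε^(-p) - (c/p) * ε^(-p)
    have hεp : (0:ℝ) < ε ^ p := Real.rpow_pos_of_pos hε.1 _
    have hcancel : ε ^ (-p) * ε ^ p = 1 := by
      rw [← Real.rpow_add hε.1]; simp
    have h2 : K * ε ^ p ≤ (ψ ε * ε ^ (-p) - (c/p) * ε ^ (-p)) * ε ^ p :=
      mul_le_mul_of_nonneg_right h1 hεp.le
    calc K * ε ^ p + c/p ≤ (ψ ε * ε ^ (-p) - (c/p) * ε ^ (-p)) * ε ^ p + c/p := by linarith
    _ = ψ ε * (ε ^ (-p) * ε ^ p) - (c/p) * (ε ^ (-p) * ε ^ p) + c/p := by ring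
    _ = ψ ε := by rw [hcancel]; ring
  have hT : Tendsto (fun ε : ℝ => K * ε ^ p + c/p) (nhdsWithin 0 (Ioi 0)) (nhds (c/p)) := by
    have := ((aux_rpow_tendsto hp).const_mul K).add_const (c/p)
    simpa using this
  have hcp : c/p ≤ 0 := by
    refine le_of_tendsto_of_tendsto hT hlim ?_
    filter_upwards [Ioc_mem_nhdsGT_of_mem (by constructor <;> [rfl; exact ht₀] : (0:ℝ) ∈ Ico 0 t₀)] with ε hε
    exact hbound ε hε
  have : 0 < c/p := div_pos hc hp
  linarith

lemma aux_contra' {ψ ψ' : ℝ → ℝ} {p c t₀ : ℝ} (hp : 0 < p) (hc : 0 < c) (ht₀ : 0 < t₀)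
    (hψd : ∀ x ∈ Ioi (0:ℝ), HasDerivAt ψ (ψ' x) x)
    (hψ0 : ∀ x ∈ Ioi (0:ℝ), 0 ≤ ψ x)
    (hg : ∀ x ∈ Ioc (0:ℝ) t₀, c ≤ x * ψ' x - p * ψ x) : False := by
  have hD : ∀ x ∈ Ioi (0:ℝ), HasDerivAt (fun x => ψ x * x ^ (-p) + (c/p) * x ^ (-p))
      ((x * ψ' x - p * ψ x - c) * x ^ (-p - 1)) x := by
    intro x hx
    have h1 := aux_ratio_deriv (p := p) hx (hψd x hx)
    have h2 := (Real.hasDerivAt_rpow_const (x := x) (p := -p) (Or.inl (ne_of_gt hx))).const_mul (c/p)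
    have h3 := h1.add h2
    refine h3.congr_deriv ?_
    have hp' : p ≠ 0 := ne_of_gt hp
    field_simp
    ring
  have hmono : MonotoneOn (fun x => ψ x * x ^ (-p) + (c/p) * x ^ (-p)) (Ioc 0 t₀) := by
    refine aux_mono (convex_Ioc 0 t₀) Ioc_subset_Ioi_self hD ?_
    intro x hx
    rw [interior_Ioc] at hx
    have hx' : x ∈ Ioc (0:ℝ) t₀ := Ioo_subset_Ioc_self hx
    have := hg x hx'
    have hxp : (0:ℝ) ≤ x ^ (-p - 1) := Real.rpow_nonneg (le_of_lt hx.1) _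
    nlinarith
  set K := ψ t₀ * t₀ ^ (-p) + (c/p) * t₀ ^ (-p) with hK
  have hbound : ∀ ε ∈ Ioc (0:ℝ) t₀, c/p ≤ K * ε ^ p := by
    intro ε hε
    have h1 := hmono hε (right_mem_Ioc.mpr ht₀) hε.2
    have hεp : (0:ℝ) < ε ^ p := Real.rpow_pos_of_pos hε.1 _
    have hcancel : ε ^ (-p) * ε ^ p = 1 := by
      rw [← Real.rpow_add hε.1]; simp
    have h2 : (ψ ε * ε ^ (-p) + (c/p) * ε ^ (-p)) * ε ^ p ≤ K * ε ^ p :=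
      mul_le_mul_of_nonneg_right h1 hεp.le
    have h3 : (ψ ε * ε ^ (-p) + (c/p) * ε ^ (-p)) * ε ^ p
        = ψ ε * (ε ^ (-p) * ε ^ p) + (c/p) * (ε ^ (-p) * ε ^ p) := by ring
    rw [h3, hcancel] at h2
    have := hψ0 ε hε.1
    linarith
  have hT : Tendsto (fun ε : ℝ => K * ε ^ p) (nhdsWithin 0 (Ioi 0)) (nhds 0) := by
    have := (aux_rpow_tendsto hp).const_mul K
    simpa using this
  have hcp : c/p ≤ 0 := by
    refine le_of_tendsto_of_tendsto tendsto_const_nhds hT ?_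
    filter_upwards [Ioc_mem_nhdsGT_of_mem (by constructor <;> [rfl; exact ht₀] : (0:ℝ) ∈ Ico 0 t₀)] with ε hε
    exact hbound ε hε
  have : 0 < c/p := div_pos hc hp
  linarith

lemma aux_lower_bound {ψ ψ' : ℝ → ℝ} {p : ℝ} (hp : 0 < p)
    (hψd : ∀ x ∈ Ioi (0:ℝ), HasDerivAt ψ (ψ' x) x)
    (hlim : Tendsto ψ (nhdsWithin 0 (Ioi 0)) (nhds 0))
    (hmono : MonotoneOn (fun x => x * ψ' x - p * ψ x) (Ioi 0)) :
    ∀ x ∈ Ioi (0:ℝ), p * ψ x ≤ x * ψ' x := by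
  intro x hx
  by_contra h
  push_neg at h
  have hc0 : 0 < p * ψ x - x * ψ' x := by linarith
  refine aux_contra hp hc0 hx hψd hlim (fun y hy => ?_)
  have := hmono hy.1 hx hy.2
  simp only at this
  linarith

lemma aux_upper_bound {ψ ψ' : ℝ → ℝ} {p : ℝ} (hp : 0 < p)
    (hψd : ∀ x ∈ Ioi (0:ℝ), HasDerivAt ψ (ψ' x) x)
    (hψ0 : ∀ x ∈ Ioi (0:ℝ), 0 ≤ ψ x)
    (hmono : MonotoneOn (fun x => p * ψ x - x * ψ' x) (Ioi 0)) :
    ∀ x ∈ Ioi (0:ℝ), x * ψ' x ≤ p * ψ x := by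
  intro x hx
  by_contra h
  push_neg at h
  have hc0 : 0 < x * ψ' x - p * ψ x := by linarith
  refine aux_contra' hp hc0 hx hψd hψ0 (fun y hy => ?_)
  have := hmono hy.1 hx hy.2
  simp only at this
  linarith

lemma aux_cancel {ρ t p : ℝ} (hρ : 0 < ρ) (ht : 0 < t) : ρ ^ (-p) * ((ρ * t) ^ p) = t ^ p := by
  rw [Real.mul_rpow hρ.le ht.le, ← mul_assoc, ← Real.rpow_add hρ]
  simp

lemma aux_scale_one {f f' : ℝ → ℝ} {p : ℝ}
    (hd : ∀ x ∈ Ioi (0:ℝ), HasDerivAt f (f' x) x)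
    (hl : ∀ x ∈ Ioi (0:ℝ), p * f x ≤ x * f' x) :
    ∀ ρ > 0, ∀ t > 0, (1 ≤ t → t ^ p * f ρ ≤ f (ρ * t)) ∧ (t ≤ 1 → f (ρ * t) ≤ t ^ p * f ρ) := by
  have hmono : MonotoneOn (fun x => f x * x ^ (-p)) (Ioi 0) := by
    refine aux_mono (convex_Ioi 0) (subset_refl _) (fun x hx => aux_ratio_deriv (p := p) hx (hd x hx)) ?_
    intro x hx
    rw [interior_Ioi] at hx
    have h1 := hl x hx
    have hxp : (0:ℝ) ≤ x ^ (-p - 1) := Real.rpow_nonneg (le_of_lt hx) _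
    nlinarith
  intro ρ hρ t ht
  have hρt : 0 < ρ * t := mul_pos hρ ht
  have hcan : ρ ^ (-p) * ((ρ * t) ^ p) = t ^ p := aux_cancel hρ ht
  have hcan2 : (ρ * t) ^ (-p) * ((ρ * t) ^ p) = 1 := by
    rw [← Real.rpow_add hρt]; simp
  have hρtp : (0:ℝ) ≤ (ρ * t) ^ p := Real.rpow_nonneg hρt.le _
  constructor
  · intro ht1
    have hle : ρ ≤ ρ * t := le_mul_of_one_le_right hρ.le ht1
    have h1 := hmono hρ hρt hle
    simp only at h1
    have h2 := mul_le_mul_of_nonneg_right h1 hρtp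
    calc t ^ p * f ρ = f ρ * (ρ ^ (-p) * ((ρ * t) ^ p)) := by rw [hcan]; ring
    _ = f ρ * ρ ^ (-p) * ((ρ * t) ^ p) := by ring
    _ ≤ f (ρ * t) * (ρ * t) ^ (-p) * ((ρ * t) ^ p) := h2
    _ = f (ρ * t) * ((ρ * t) ^ (-p) * ((ρ * t) ^ p)) := by ring
    _ = f (ρ * t) := by rw [hcan2]; ring
  · intro ht1
    have hle : ρ * t ≤ ρ := mul_le_of_le_one_right hρ.le ht1
    have h1 := hmono hρt hρ hle
    simp only at h1
    have h2 := mul_le_mul_of_nonneg_right h1 hρtp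
    calc f (ρ * t) = f (ρ * t) * ((ρ * t) ^ (-p) * ((ρ * t) ^ p)) := by rw [hcan2]; ring
    _ = f (ρ * t) * (ρ * t) ^ (-p) * ((ρ * t) ^ p) := by ring
    _ ≤ f ρ * ρ ^ (-p) * ((ρ * t) ^ p) := h2
    _ = f ρ * (ρ ^ (-p) * ((ρ * t) ^ p)) := by ring
    _ = t ^ p * f ρ := by rw [hcan]; ring

lemma aux_scale {f f' : ℝ → ℝ} {p q : ℝ} (hpq : p ≤ q)
    (hd : ∀ x ∈ Ioi (0:ℝ), HasDerivAt f (f' x) x)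
    (hl : ∀ x ∈ Ioi (0:ℝ), p * f x ≤ x * f' x)
    (hu : ∀ x ∈ Ioi (0:ℝ), x * f' x ≤ q * f x) :
    ∀ ρ > 0, ∀ t > 0,
      min (t ^ p) (t ^ q) * f ρ ≤ f (ρ * t) ∧ f (ρ * t) ≤ max (t ^ p) (t ^ q) * f ρ := by
  have H1 := aux_scale_one hd hl
  have H2 := aux_scale_one (f := fun x => -f x) (f' := fun x => -f' x) (p := q)
    (fun x hx => (hd x hx).neg) (fun x hx => by have := hu x hx; linarith)
  intro ρ hρ t ht
  have h1 := H1 ρ hρ t ht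
  have h2 := H2 ρ hρ t ht
  rcases le_total t 1 with ht1 | ht1
  · have hmin : min (t ^ p) (t ^ q) = t ^ q :=
      min_eq_right (Real.rpow_le_rpow_of_exponent_ge ht ht1 hpq)
    have hmax : max (t ^ p) (t ^ q) = t ^ p :=
      max_eq_left (Real.rpow_le_rpow_of_exponent_ge ht ht1 hpq)
    rw [hmin, hmax]
    have h2' := h2.2 ht1
    have h1' := h1.2 ht1
    constructor <;> linarith
  · have hmin : min (t ^ p) (t ^ q) = t ^ p :=
      min_eq_left (Real.rpow_le_rpow_of_exponent_le ht1 hpq)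
    have hmax : max (t ^ p) (t ^ q) = t ^ q :=
      max_eq_right (Real.rpow_le_rpow_of_exponent_le ht1 hpq)
    rw [hmin, hmax]
    have h1' := h1.1 ht1
    have h2' := h2.1 ht1
    constructor <;> linarith

lemma aux_inv_mono {F Finv : ℝ → ℝ}
    (hFinv : ∀ s ∈ Ici (0:ℝ), 0 ≤ Finv s ∧ F (Finv s) = s)
    (hFmono : MonotoneOn F (Ici 0)) : MonotoneOn Finv (Ici 0) := by
  intro a ha b hb hab
  by_contra hlt
  push_neg at hlt
  have h1 : b ≤ a := by
    have := hFmono (hFinv b hb).1 (hFinv a ha).1 hlt.le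
    rwa [(hFinv b hb).2, (hFinv a ha).2] at this
  have hab' : a = b := le_antisymm hab h1
  rw [hab'] at hlt
  exact lt_irrefl _ hlt

lemma aux_pow_min {p q t : ℝ} (hp : 0 < p) (hpq : p ≤ q) (ht : 0 < t) :
    max ((min (t ^ (1/p)) (t ^ (1/q))) ^ p) ((min (t ^ (1/p)) (t ^ (1/q))) ^ q) ≤ t := by
  have hq : 0 < q := lt_of_lt_of_le hp hpq
  have hinv : 1/q ≤ 1/p := one_div_le_one_div_of_le hp hpq
  have hqp : 1 ≤ q / p := (one_le_div hp).mpr hpq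
  have hpq1 : p / q ≤ 1 := (div_le_one hq).mpr hpq
  have e1 : (t ^ (1/p)) ^ p = t := by
    rw [← Real.rpow_mul ht.le, one_div_mul_cancel (ne_of_gt hp), Real.rpow_one]
  have e2 : (t ^ (1/q)) ^ q = t := by
    rw [← Real.rpow_mul ht.le, one_div_mul_cancel (ne_of_gt hq), Real.rpow_one]
  rcases le_total t 1 with ht1 | ht1
  · have hcc : min (t ^ (1/p)) (t ^ (1/q)) = t ^ (1/p) :=
      min_eq_left (Real.rpow_le_rpow_of_exponent_ge ht ht1 hinv)
    rw [hcc]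
    refine max_le (le_of_eq e1) ?_
    rw [← Real.rpow_mul ht.le]
    calc t ^ (1/p * q) ≤ t ^ (1:ℝ) := Real.rpow_le_rpow_of_exponent_ge ht ht1 (by
      rw [one_div_mul_eq_div]; exact hqp)
    _ = t := Real.rpow_one t
  · have hcc : min (t ^ (1/p)) (t ^ (1/q)) = t ^ (1/q) :=
      min_eq_right (Real.rpow_le_rpow_of_exponent_le ht1 hinv)
    rw [hcc]
    refine max_le ?_ (le_of_eq e2)
    rw [← Real.rpow_mul ht.le]
    calc t ^ (1/q * p) ≤ t ^ (1:ℝ) := Real.rpow_le_rpow_of_exponent_le ht1 (by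
      rw [one_div_mul_eq_div]; exact hpq1)
    _ = t := Real.rpow_one t

lemma aux_pow_max {p q t : ℝ} (hp : 0 < p) (hpq : p ≤ q) (ht : 0 < t) :
    t ≤ min ((max (t ^ (1/p)) (t ^ (1/q))) ^ p) ((max (t ^ (1/p)) (t ^ (1/q))) ^ q) := by
  have hq : 0 < q := lt_of_lt_of_le hp hpq
  have hinv : 1/q ≤ 1/p := one_div_le_one_div_of_le hp hpq
  have hqp : 1 ≤ q / p := (one_le_div hp).mpr hpq
  have hpq1 : p / q ≤ 1 := (div_le_one hq).mpr hpq
  have e1 : (t ^ (1/p)) ^ p = t := by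
    rw [← Real.rpow_mul ht.le, one_div_mul_cancel (ne_of_gt hp), Real.rpow_one]
  have e2 : (t ^ (1/q)) ^ q = t := by
    rw [← Real.rpow_mul ht.le, one_div_mul_cancel (ne_of_gt hq), Real.rpow_one]
  rcases le_total t 1 with ht1 | ht1
  · have hcc : max (t ^ (1/p)) (t ^ (1/q)) = t ^ (1/q) :=
      max_eq_right (Real.rpow_le_rpow_of_exponent_ge ht ht1 hinv)
    rw [hcc]
    refine le_min ?_ (le_of_eq e2.symm)
    rw [← Real.rpow_mul ht.le]
    calc t = t ^ (1:ℝ) := (Real.rpow_one t).symm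
    _ ≤ t ^ (1/q * p) := Real.rpow_le_rpow_of_exponent_ge ht ht1 (by
      rw [one_div_mul_eq_div]; exact hpq1)
  · have hcc : max (t ^ (1/p)) (t ^ (1/q)) = t ^ (1/p) :=
      max_eq_left (Real.rpow_le_rpow_of_exponent_le ht1 hinv)
    rw [hcc]
    refine le_min (le_of_eq e1.symm) ?_
    rw [← Real.rpow_mul ht.le]
    calc t = t ^ (1:ℝ) := (Real.rpow_one t).symm
    _ ≤ t ^ (1/p * q) := Real.rpow_le_rpow_of_exponent_le ht1 (by
      rw [one_div_mul_eq_div]; exact hqp)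

lemma aux_invert {F Finv : ℝ → ℝ} {p q : ℝ} (hp : 0 < p) (hpq : p ≤ q)
    (hF0 : F 0 = 0)
    (hFinv : ∀ s ∈ Ici (0:ℝ), 0 ≤ Finv s ∧ F (Finv s) = s)
    (hFinv2 : ∀ x ∈ Ici (0:ℝ), Finv (F x) = x)
    (hFmono : MonotoneOn F (Ici 0))
    (hscale : ∀ ρ > 0, ∀ t > 0,
      min (t ^ p) (t ^ q) * F ρ ≤ F (ρ * t) ∧ F (ρ * t) ≤ max (t ^ p) (t ^ q) * F ρ) :
    ∀ ρ > 0, ∀ t > 0,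
      min (t ^ (1/p)) (t ^ (1/q)) * Finv ρ ≤ Finv (ρ * t) ∧
      Finv (ρ * t) ≤ max (t ^ (1/p)) (t ^ (1/q)) * Finv ρ := by
  have hInvMono := aux_inv_mono hFinv hFmono
  intro ρ hρ t ht
  have hρt : 0 < ρ * t := mul_pos hρ ht
  set u := Finv ρ with hu
  have hu0 : 0 ≤ u := (hFinv ρ (le_of_lt hρ)).1
  have hFu : F u = ρ := (hFinv ρ (le_of_lt hρ)).2
  have hupos : 0 < u := by
    rcases lt_or_eq_of_le hu0 with h | h
    · exact h
    · exfalso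
      rw [← h, hF0] at hFu
      linarith
  constructor
  · -- lower bound
    set c := min (t ^ (1/p)) (t ^ (1/q)) with hc
    have hcpos : 0 < c := lt_min (Real.rpow_pos_of_pos ht _) (Real.rpow_pos_of_pos ht _)
    have hkey : max (c ^ p) (c ^ q) ≤ t := aux_pow_min hp hpq ht
    have h1 := (hscale u hupos c hcpos).2
    rw [hFu] at h1
    have h2 : F (u * c) ≤ ρ * t := by
      calc F (u * c) ≤ max (c ^ p) (c ^ q) * ρ := h1
      _ ≤ t * ρ := mul_le_mul_of_nonneg_right hkey hρ.le
      _ = ρ * t := mul_comm t ρ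
    have huc : 0 ≤ u * c := (mul_pos hupos hcpos).le
    have hFuc : 0 ≤ F (u * c) := by
      have := hFmono (le_refl (0:ℝ)) huc huc
      rwa [hF0] at this
    have h3 := hInvMono hFuc hρt.le h2
    rw [hFinv2 (u * c) huc] at h3
    calc c * Finv ρ = u * c := mul_comm c u
    _ ≤ Finv (ρ * t) := h3
  · -- upper bound
    set c := max (t ^ (1/p)) (t ^ (1/q)) with hc
    have hcpos : 0 < c := lt_max_of_lt_left (Real.rpow_pos_of_pos ht _)
    have hkey : t ≤ min (c ^ p) (c ^ q) := aux_pow_max hp hpq ht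
    have h1 := (hscale u hupos c hcpos).1
    rw [hFu] at h1
    have h2 : ρ * t ≤ F (u * c) := by
      calc ρ * t = t * ρ := mul_comm ρ t
      _ ≤ min (c ^ p) (c ^ q) * ρ := mul_le_mul_of_nonneg_right hkey hρ.le
      _ ≤ F (u * c) := h1
    have huc : 0 ≤ u * c := (mul_pos hupos hcpos).le
    have hFuc : 0 ≤ F (u * c) := le_trans hρt.le h2
    have h3 := hInvMono hρt.le hFuc h2
    rw [hFinv2 (u * c) huc] at h3
    calc Finv (ρ * t) ≤ u * c := h3
    _ = c * Finv ρ := mul_comm u c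

lemma aux_nonneg {g : ℝ → ℝ} (hg : MonotoneOn g (Ioi 0))
    (h0 : Tendsto g (nhdsWithin 0 (Ioi 0)) (nhds 0)) : ∀ x ∈ Ioi (0:ℝ), 0 ≤ g x := by
  intro x hx
  refine le_of_tendsto h0 ?_
  filter_upwards [Ioo_mem_nhdsGT_of_mem (left_mem_Ico.mpr hx)] with s hs
  exact hg hs.1 hx hs.2.le

/-- The N-function `Φ(t) = ∫₀ᵗ s·φ(s) ds`. -/
noncomputable def Phi (φ : ℝ → ℝ) (t : ℝ) : ℝ := ∫ s in (0:ℝ)..t, s * φ s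

/-- `G(t) = ∫₀ᵗ Φ⁻¹(s)·s^{−(N+1)/N} ds`, whose inverse is the Sobolev conjugate `Φ*`. -/
noncomputable def sobG (Phinv : ℝ → ℝ) (N t : ℝ) : ℝ :=
  ∫ s in (0:ℝ)..t, Phinv s * s ^ (-(N + 1) / N)

/-- the Sobolev conjugate satisfies
`min{t^{ℓ*}, t^{m*}}·Φ*(ρ) ≤ Φ*(ρt) ≤ max{t^{ℓ*}, t^{m*}}·Φ*(ρ)` for all `ρ, t > 0`,
where `ℓ* = ℓN/(N−ℓ)` and `m* = mN/(N−m)`. -/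
theorem stmt_15 (φ : ℝ → ℝ) (ℓ m : ℝ)
    (hφ_pos : ∀ t > 0, 0 < φ t)
    (hφ_C2 : ContDiffOn ℝ 2 φ (Set.Ioi 0))
    (hℓ : 1 < ℓ) (hℓm : ℓ ≤ m)
    (hφ1₀ : Tendsto (fun t => t * φ t) (nhdsWithin 0 (Set.Ioi 0)) (nhds 0))
    (hφ1top : Tendsto (fun t => t * φ t) atTop atTop)
    (hφ2 : StrictMonoOn (fun t => t * φ t) (Set.Ioi 0))
    (hφ3 : ∀ t > 0,
      (ℓ - 2) * deriv (fun s => s * φ s) t ≤ t * deriv (deriv (fun s => s * φ s)) t ∧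
      t * deriv (deriv (fun s => s * φ s)) t ≤ (m - 2) * deriv (fun s => s * φ s) t)
    (N : ℝ) (hN : m < N)
    (Phinv : ℝ → ℝ)
    (hPhinv : ∀ s ∈ Set.Ici (0:ℝ), 0 ≤ Phinv s ∧ Phi φ (Phinv s) = s)
    (hPhinv2 : ∀ t ∈ Set.Ici (0:ℝ), Phinv (Phi φ t) = t)
    (Phistar : ℝ → ℝ)
    (hPhistar : ∀ t ∈ Set.Ici (0:ℝ), 0 ≤ Phistar t ∧ sobG Phinv N (Phistar t) = t)
    (hPhistar2 : ∀ t ∈ Set.Ici (0:ℝ), Phistar (sobG Phinv N t) = t)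
    (lstar mstar : ℝ) (hlstar : lstar = ℓ * N / (N - ℓ)) (hmstar : mstar = m * N / (N - m)) :
    ∀ ρ > 0, ∀ t > 0,
      min (t ^ lstar) (t ^ mstar) * Phistar ρ ≤ Phistar (ρ * t) ∧
      Phistar (ρ * t) ≤ max (t ^ lstar) (t ^ mstar) * Phistar ρ := by
  have hm1 : 1 < m := lt_of_lt_of_le hℓ hℓm
  have hℓ0 : 0 < ℓ := by linarith
  have hm0 : 0 < m := by linarith
  have hN0 : 0 < N := by linarith
  set ψ : ℝ → ℝ := fun s => s * φ s with hψdef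
  have hψC2 : ContDiffOn ℝ 2 ψ (Ioi 0) := ContDiffOn.mul contDiffOn_id hφ_C2
  have hψd : ∀ x ∈ Ioi (0:ℝ), HasDerivAt ψ (deriv ψ x) x := by
    intro x hx
    exact ((hψC2.differentiableOn (by norm_num)).differentiableAt
      (isOpen_Ioi.mem_nhds hx)).hasDerivAt
  have hψ'C1 : ContDiffOn ℝ 1 (deriv ψ) (Ioi 0) :=
    hψC2.deriv_of_isOpen isOpen_Ioi (by norm_num)
  have hψd2 : ∀ x ∈ Ioi (0:ℝ), HasDerivAt (deriv ψ) (deriv (deriv ψ) x) x := by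
    intro x hx
    exact ((hψ'C1.differentiableOn (by norm_num)).differentiableAt
      (isOpen_Ioi.mem_nhds hx)).hasDerivAt
  have hψpos : ∀ x ∈ Ioi (0:ℝ), 0 < ψ x := fun x hx => mul_pos hx (hφ_pos x hx)
  have hψ0 : ∀ x ∈ Ioi (0:ℝ), 0 ≤ ψ x := fun x hx => (hψpos x hx).le
  have hψzero : ψ 0 = 0 := by simp [hψdef]
  have hψnn : ∀ u : ℝ, 0 ≤ u → 0 ≤ ψ u := by
    intro u hu
    rcases eq_or_lt_of_le hu with h | h
    · rw [← h, hψzero]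
    · exact (hψpos u h).le
  have hψmono : MonotoneOn ψ (Ici 0) := by
    intro u hu v hv huv
    rcases eq_or_lt_of_le (mem_Ici.mp hu) with h0 | h0
    · rw [← h0, hψzero]; exact hψnn v hv
    · exact hφ2.monotoneOn (mem_Ioi.mpr h0) (mem_Ioi.mpr (lt_of_lt_of_le h0 huv)) huv
  have hψInt : ∀ {a b : ℝ}, 0 ≤ a → a ≤ b → IntervalIntegrable ψ volume a b := by
    intro a b ha hab
    apply MonotoneOn.intervalIntegrable
    rw [uIcc_of_le hab]
    exact hψmono.mono (fun x hx => le_trans ha hx.1)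
  have hPhiEq : Phi φ = fun u => ∫ s in (0:ℝ)..u, ψ s := rfl
  have hPhiDeriv : ∀ x ∈ Ioi (0:ℝ), HasDerivAt (Phi φ) (ψ x) x := by
    intro x hx
    have hmeas := (hψC2.continuousOn).stronglyMeasurableAtFilter isOpen_Ioi
      (μ := volume) x hx
    have hca : ContinuousAt ψ x := (hψC2.continuousOn).continuousAt (isOpen_Ioi.mem_nhds hx)
    rw [hPhiEq]
    exact intervalIntegral.integral_hasDerivAt_right (hψInt le_rfl hx.le) hmeas hca
  have hPhi0 : Phi φ 0 = 0 := intervalIntegral.integral_same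
  have hPhiMono : MonotoneOn (Phi φ) (Ici 0) := by
    intro a ha b hb hab
    have h1 := intervalIntegral.integral_add_adjacent_intervals
      (μ := volume) (f := ψ) (hψInt le_rfl ha) (hψInt ha hab)
    have h2 : 0 ≤ ∫ x in a..b, ψ x :=
      intervalIntegral.integral_nonneg hab (fun u hu => hψnn u (le_trans ha hu.1))
    rw [hPhiEq]
    simp only
    linarith [h1]
  have hxψTend : Tendsto (fun x => x * ψ x) (nhdsWithin 0 (Ioi 0)) (nhds 0) := by
    have h1 : Tendsto (fun x : ℝ => x) (nhdsWithin 0 (Ioi 0)) (nhds 0) :=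
      tendsto_id.mono_left nhdsWithin_le_nhds
    have := h1.mul hφ1₀
    simpa using this
  have hPhiTend : Tendsto (Phi φ) (nhdsWithin 0 (Ioi 0)) (nhds 0) := by
    refine squeeze_zero' ?_ ?_ hxψTend
    · filter_upwards [self_mem_nhdsWithin] with x hx
      exact intervalIntegral.integral_nonneg (le_of_lt hx) (fun u hu => hψnn u hu.1)
    · filter_upwards [self_mem_nhdsWithin] with x hx
      have hle : ∫ s in (0:ℝ)..x, ψ s ≤ ∫ _ in (0:ℝ)..x, ψ x :=
        intervalIntegral.integral_mono_on (le_of_lt hx) (hψInt le_rfl (le_of_lt hx))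
          intervalIntegrable_const (fun u hu => hψmono hu.1 (mem_Ici.mpr (le_of_lt hx)) hu.2)
      have heq : ∫ _ in (0:ℝ)..x, ψ x = x * ψ x := by
        rw [intervalIntegral.integral_const, smul_eq_mul, sub_zero]
      rw [hPhiEq]
      simp only
      rw [← heq]
      exact hle
  have hg1mono : MonotoneOn (fun x => x * deriv ψ x - (ℓ - 1) * ψ x) (Ioi 0) := by
    refine aux_mono (convex_Ioi 0) (subset_refl _)
      (f' := fun x => x * deriv (deriv ψ) x - (ℓ - 2) * deriv ψ x)
      (fun x hx => ?_) (fun x hx => ?_)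
    · have h1 := ((hasDerivAt_id' (x := x)).mul (hψd2 x hx)).sub ((hψd x hx).const_mul (ℓ - 1))
      refine h1.congr_deriv ?_
      ring
    · rw [interior_Ioi] at hx
      have := (hφ3 x hx).1
      linarith
  have hψlow : ∀ x ∈ Ioi (0:ℝ), (ℓ - 1) * ψ x ≤ x * deriv ψ x :=
    aux_lower_bound (by linarith) hψd hφ1₀ hg1mono
  have hg2mono : MonotoneOn (fun x => (m - 1) * ψ x - x * deriv ψ x) (Ioi 0) := by
    refine aux_mono (convex_Ioi 0) (subset_refl _)
      (f' := fun x => (m - 2) * deriv ψ x - x * deriv (deriv ψ) x)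
      (fun x hx => ?_) (fun x hx => ?_)
    · have h1 := ((hψd x hx).const_mul (m - 1)).sub ((hasDerivAt_id' (x := x)).mul (hψd2 x hx))
      refine h1.congr_deriv ?_
      ring
    · rw [interior_Ioi] at hx
      have := (hφ3 x hx).2
      linarith
  have hψup : ∀ x ∈ Ioi (0:ℝ), x * deriv ψ x ≤ (m - 1) * ψ x :=
    aux_upper_bound (by linarith) hψd hψ0 hg2mono
  have hG1mono : MonotoneOn (fun x => x * ψ x - ℓ * Phi φ x) (Ioi 0) := by
    refine aux_mono (convex_Ioi 0) (subset_refl _)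
      (f' := fun x => x * deriv ψ x - (ℓ - 1) * ψ x)
      (fun x hx => ?_) (fun x hx => ?_)
    · have h1 := ((hasDerivAt_id' (x := x)).mul (hψd x hx)).sub ((hPhiDeriv x hx).const_mul ℓ)
      refine h1.congr_deriv ?_
      ring
    · rw [interior_Ioi] at hx
      have := hψlow x hx
      linarith
  have hG1tend : Tendsto (fun x => x * ψ x - ℓ * Phi φ x) (nhdsWithin 0 (Ioi 0)) (nhds 0) := by
    have := hxψTend.sub (hPhiTend.const_mul ℓ)
    simpa using this
  have hPhiLow : ∀ x ∈ Ioi (0:ℝ), ℓ * Phi φ x ≤ x * ψ x := by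
    intro x hx
    have := aux_nonneg hG1mono hG1tend x hx
    linarith
  have hG2mono : MonotoneOn (fun x => m * Phi φ x - x * ψ x) (Ioi 0) := by
    refine aux_mono (convex_Ioi 0) (subset_refl _)
      (f' := fun x => (m - 1) * ψ x - x * deriv ψ x)
      (fun x hx => ?_) (fun x hx => ?_)
    · have h1 := ((hPhiDeriv x hx).const_mul m).sub ((hasDerivAt_id' (x := x)).mul (hψd x hx))
      refine h1.congr_deriv ?_
      ring
    · rw [interior_Ioi] at hx
      have := hψup x hx
      linarith
  have hG2tend : Tendsto (fun x => m * Phi φ x - x * ψ x) (nhdsWithin 0 (Ioi 0)) (nhds 0) := by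
    have := (hPhiTend.const_mul m).sub hxψTend
    simpa using this
  have hPhiUp : ∀ x ∈ Ioi (0:ℝ), x * ψ x ≤ m * Phi φ x := by
    intro x hx
    have := aux_nonneg hG2mono hG2tend x hx
    linarith
  have hPhiScale := aux_scale hℓm hPhiDeriv hPhiLow hPhiUp
  have hPhinvScale := aux_invert hℓ0 hℓm hPhi0 hPhinv hPhinv2 hPhiMono hPhiScale
  -- the sobG integrand
  set e : ℝ := -(N + 1) / N with he
  set h : ℝ → ℝ := fun s => Phinv s * s ^ e with hhdef
  have hGEq : ∀ x : ℝ, sobG Phinv N x = ∫ s in (0:ℝ)..x, h s := fun x => rfl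
  have hPhinv0 : Phinv 0 = 0 := by
    have := hPhinv2 0 (mem_Ici.mpr le_rfl)
    rwa [hPhi0] at this
  have hPhinvnn : ∀ s : ℝ, 0 ≤ s → 0 ≤ Phinv s := fun s hs => (hPhinv s hs).1
  have hPhinvmono : MonotoneOn Phinv (Ici 0) := aux_inv_mono hPhinv hPhiMono
  have hhnn : ∀ s : ℝ, 0 ≤ s → 0 ≤ h s := fun s hs =>
    mul_nonneg (hPhinvnn s hs) (Real.rpow_nonneg hs _)
  have hh0 : h 0 = 0 := by
    simp [hhdef, hPhinv0]
  have hNe : (N + 1) / N = 1 + 1 / N := by field_simp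
  have hα : (-1 : ℝ) < 1 / m + e := by
    have h1 : 1 / N < 1 / m := one_div_lt_one_div_of_lt hm0 hN
    rw [he, neg_div, hNe]
    linarith
  have hPhinv_le : ∀ ρ : ℝ, 0 < ρ → ∀ x ∈ Ioc (0:ℝ) ρ,
      Phinv x ≤ Phinv ρ / ρ ^ (1/m) * x ^ (1/m) := by
    intro ρ hρ x hx
    have hxρ : 0 < x / ρ := div_pos hx.1 hρ
    have h1 := (hPhinvScale ρ hρ (x / ρ) hxρ).2
    have hxx : ρ * (x / ρ) = x := by field_simp
    rw [hxx] at h1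
    have hmax : max ((x/ρ) ^ (1/ℓ)) ((x/ρ) ^ (1/m)) = (x/ρ) ^ (1/m) :=
      max_eq_right (Real.rpow_le_rpow_of_exponent_ge hxρ ((div_le_one hρ).mpr hx.2)
        (one_div_le_one_div_of_le hℓ0 hℓm))
    rw [hmax, Real.div_rpow hx.1.le hρ.le] at h1
    calc Phinv x ≤ x ^ (1/m) / ρ ^ (1/m) * Phinv ρ := h1
    _ = Phinv ρ / ρ ^ (1/m) * x ^ (1/m) := by ring
  have hIntH : ∀ b : ℝ, 0 < b → IntervalIntegrable h volume 0 b := by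
    intro b hb
    rw [intervalIntegrable_iff_integrableOn_Ioc_of_le hb.le]
    set C := Phinv b / b ^ (1/m) with hC
    have hC0 : 0 ≤ C := div_nonneg (hPhinvnn b hb.le) (Real.rpow_nonneg hb.le _)
    have hbound_int : IntegrableOn (fun x => C * x ^ (1/m + e)) (Ioc 0 b) volume := by
      have := (intervalIntegral.intervalIntegrable_rpow' (a := 0) (b := b) hα).const_mul C
      rwa [intervalIntegrable_iff_integrableOn_Ioc_of_le hb.le] at this
    have hgmono : Monotone (fun x : ℝ => Phinv (max x 0)) := fun u v huv =>
      hPhinvmono (le_max_right u 0) (le_max_right v 0) (max_le_max huv le_rfl)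
    have hgm : Measurable (fun x : ℝ => Phinv (max x 0)) := hgmono.measurable
    have hrm : Measurable (fun x : ℝ => x ^ e) := aux_rpow_meas e
    have hmeas : AEStronglyMeasurable h (volume.restrict (Ioc 0 b)) := by
      refine ((hgm.mul hrm).aestronglyMeasurable).congr ?_
      filter_upwards [ae_restrict_mem measurableSet_Ioc] with x hx
      rw [hhdef]
      simp only [Pi.mul_apply]
      rw [max_eq_left hx.1.le]
    refine Integrable.mono' hbound_int hmeas ?_
    filter_upwards [ae_restrict_mem measurableSet_Ioc] with x hx
    rw [Real.norm_of_nonneg (hhnn x hx.1.le)]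
    have h2 := hPhinv_le b hb x hx
    have h3 : (0:ℝ) ≤ x ^ e := Real.rpow_nonneg hx.1.le _
    calc h x = Phinv x * x ^ e := rfl
    _ ≤ (C * x ^ (1/m)) * x ^ e := mul_le_mul_of_nonneg_right h2 h3
    _ = C * (x ^ (1/m) * x ^ e) := by ring
    _ = C * x ^ (1/m + e) := by rw [← Real.rpow_add hx.1]
  have hIntH' : ∀ b : ℝ, 0 ≤ b → IntervalIntegrable h volume 0 b := by
    intro b hb
    rcases eq_or_lt_of_le hb with hb' | hb'
    · rw [← hb']
    · exact hIntH b hb'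
  have hG0 : sobG Phinv N 0 = 0 := intervalIntegral.integral_same
  have hGmono : MonotoneOn (sobG Phinv N) (Ici 0) := by
    intro a ha b hb hab
    have h1 := intervalIntegral.integral_add_adjacent_intervals
      (μ := volume) (f := h) (hIntH' a ha) ((hIntH' b hb).mono_set (by
        rw [uIcc_of_le hab, uIcc_of_le hb]
        exact Icc_subset_Icc ha le_rfl))
    have h2 : 0 ≤ ∫ x in a..b, h x :=
      intervalIntegral.integral_nonneg hab (fun u hu => hhnn u (le_trans ha hu.1))
    rw [hGEq a, hGEq b]
    linarith [h1]
  have hGscale : ∀ ρ > 0, ∀ t > 0,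
      min (t ^ (1/m - 1/N)) (t ^ (1/ℓ - 1/N)) * sobG Phinv N ρ ≤ sobG Phinv N (ρ * t) ∧
      sobG Phinv N (ρ * t) ≤ max (t ^ (1/m - 1/N)) (t ^ (1/ℓ - 1/N)) * sobG Phinv N ρ := by
    intro ρ hρ t ht
    have hρt : 0 < ρ * t := mul_pos hρ ht
    have ht' : t ≠ 0 := ne_of_gt ht
    have hsub := intervalIntegral.integral_comp_mul_right (a := 0) (b := ρ) h ht'
    rw [zero_mul, smul_eq_mul] at hsub
    have hup : ∀ x ∈ Icc (0:ℝ) ρ, h (x * t) ≤ (max (t^(1/ℓ)) (t^(1/m)) * t ^ e) * h x := by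
      intro x hx
      rcases eq_or_lt_of_le hx.1 with h0 | h0
      · simp [← h0, hh0]
      · have hs := (hPhinvScale x h0 t ht).2
        have hxt : 0 < x * t := mul_pos h0 ht
        have hmul : (x * t) ^ e = x ^ e * t ^ e := Real.mul_rpow h0.le ht.le
        calc h (x*t) = Phinv (x*t) * (x*t) ^ e := rfl
        _ ≤ (max (t^(1/ℓ)) (t^(1/m)) * Phinv x) * (x*t) ^ e :=
          mul_le_mul_of_nonneg_right hs (Real.rpow_nonneg hxt.le _)
        _ = (max (t^(1/ℓ)) (t^(1/m)) * t ^ e) * (Phinv x * x ^ e) := by rw [hmul]; ring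
        _ = (max (t^(1/ℓ)) (t^(1/m)) * t ^ e) * h x := rfl
    have hlo : ∀ x ∈ Icc (0:ℝ) ρ, (min (t^(1/ℓ)) (t^(1/m)) * t ^ e) * h x ≤ h (x * t) := by
      intro x hx
      rcases eq_or_lt_of_le hx.1 with h0 | h0
      · simp [← h0, hh0]
      · have hs := (hPhinvScale x h0 t ht).1
        have hxt : 0 < x * t := mul_pos h0 ht
        have hmul : (x * t) ^ e = x ^ e * t ^ e := Real.mul_rpow h0.le ht.le
        calc (min (t^(1/ℓ)) (t^(1/m)) * t ^ e) * h x
            = (min (t^(1/ℓ)) (t^(1/m)) * Phinv x) * (x ^ e * t ^ e) := by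
              rw [hhdef]; ring
        _ = (min (t^(1/ℓ)) (t^(1/m)) * Phinv x) * (x*t) ^ e := by rw [hmul]
        _ ≤ Phinv (x*t) * (x*t) ^ e :=
          mul_le_mul_of_nonneg_right hs (Real.rpow_nonneg hxt.le _)
        _ = h (x*t) := rfl
    have hint2 : IntervalIntegrable h volume 0 ρ := hIntH ρ hρ
    have hint1 : IntervalIntegrable (fun x => h (x * t)) volume 0 ρ := by
      have h1 := (hIntH (ρ*t) hρt).comp_mul_right (c := t)
      have he1 : (0:ℝ)/t = 0 := zero_div t
      have he2 : ρ * t / t = ρ := by field_simp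
      rwa [he1, he2] at h1
    have hIup : ∫ x in (0:ℝ)..ρ, h (x*t) ≤ (max (t^(1/ℓ)) (t^(1/m)) * t ^ e) * sobG Phinv N ρ := by
      have h1 := intervalIntegral.integral_mono_on hρ.le hint1 (hint2.const_mul _) hup
      rwa [intervalIntegral.integral_const_mul, ← hGEq ρ] at h1
    have hIlo : (min (t^(1/ℓ)) (t^(1/m)) * t ^ e) * sobG Phinv N ρ ≤ ∫ x in (0:ℝ)..ρ, h (x*t) := by
      have h1 := intervalIntegral.integral_mono_on hρ.le (hint2.const_mul _) hint1 hlo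
      rwa [intervalIntegral.integral_const_mul, ← hGEq ρ] at h1
    have hGval : sobG Phinv N (ρ*t) = t * ∫ x in (0:ℝ)..ρ, h (x*t) := by
      rw [hGEq, hsub]
      field_simp
    have hte : t * t ^ e = t ^ (-1/N : ℝ) := by
      nth_rewrite 1 [← Real.rpow_one t]
      rw [← Real.rpow_add ht]
      congr 1
      rw [he]
      field_simp
      ring
    have hNn : (0:ℝ) ≤ t ^ (-1/N : ℝ) := Real.rpow_nonneg ht.le _
    have hadd1 : t ^ (1/ℓ) * t ^ (-1/N : ℝ) = t ^ (1/ℓ - 1/N) := by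
      rw [← Real.rpow_add ht]
      congr 1
      ring
    have hadd2 : t ^ (1/m) * t ^ (-1/N : ℝ) = t ^ (1/m - 1/N) := by
      rw [← Real.rpow_add ht]
      congr 1
      ring
    constructor
    · have h2 := mul_le_mul_of_nonneg_left hIlo ht.le
      rw [← hGval] at h2
      calc min (t ^ (1/m - 1/N)) (t ^ (1/ℓ - 1/N)) * sobG Phinv N ρ
          = (min (t^(1/ℓ)) (t^(1/m)) * t ^ (-1/N : ℝ)) * sobG Phinv N ρ := by
            rw [min_mul_of_nonneg _ _ hNn, hadd1, hadd2, min_comm]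
      _ = t * ((min (t^(1/ℓ)) (t^(1/m)) * t ^ e) * sobG Phinv N ρ) := by
            rw [← hte]; ring
      _ ≤ sobG Phinv N (ρ*t) := h2
    · have h2 := mul_le_mul_of_nonneg_left hIup ht.le
      rw [← hGval] at h2
      calc sobG Phinv N (ρ*t) ≤ t * ((max (t^(1/ℓ)) (t^(1/m)) * t ^ e) * sobG Phinv N ρ) := h2
      _ = (max (t^(1/ℓ)) (t^(1/m)) * t ^ (-1/N : ℝ)) * sobG Phinv N ρ := by
            rw [← hte]; ring
      _ = max (t ^ (1/m - 1/N)) (t ^ (1/ℓ - 1/N)) * sobG Phinv N ρ := by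
            rw [max_mul_of_nonneg _ _ hNn, hadd1, hadd2, max_comm]
  have hp0 : 0 < 1/m - 1/N := by
    have := one_div_lt_one_div_of_lt hm0 hN
    linarith
  have hpq' : 1/m - 1/N ≤ 1/ℓ - 1/N := by
    have := one_div_le_one_div_of_le hℓ0 hℓm
    linarith
  have hFinal := aux_invert hp0 hpq' hG0 hPhistar hPhistar2 hGmono hGscale
  intro ρ hρ t ht
  have h1 := hFinal ρ hρ t ht
  have hm' : m ≠ 0 := ne_of_gt hm0
  have hN' : N ≠ 0 := ne_of_gt hN0
  have hℓ' : ℓ ≠ 0 := ne_of_gt hℓ0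
  have hNm : N - m ≠ 0 := by intro hh; rw [sub_eq_zero] at hh; exact absurd hh.symm (ne_of_lt hN)
  have hNl : N - ℓ ≠ 0 := by
    intro hh; rw [sub_eq_zero] at hh
    have : ℓ < N := lt_of_le_of_lt hℓm hN
    exact absurd hh.symm (ne_of_lt this)
  have hml : 1/(1/m - 1/N) = mstar := by
    have h2 : 1/m - 1/N = (N - m)/(m*N) := by field_simp
    rw [h2, one_div_div, hmstar]
  have hll : 1/(1/ℓ - 1/N) = lstar := by
    have h2 : 1/ℓ - 1/N = (N - ℓ)/(ℓ*N) := by field_simp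
    rw [h2, one_div_div, hlstar]
  rw [hml, hll] at h1
  exact ⟨by rw [min_comm]; exact h1.1, by rw [max_comm]; exact h1.2⟩
end

section
/- With the Luxemburg norm ‖u‖_{Φ*} = inf{ λ > 0 : ∫_Ω Φ*(|u|/λ) dμ ≤ 1 }, one has min{‖u‖_{Φ*}^{ℓ*}, ‖u‖_{Φ*}^{m*}} ≤ ∫_Ω Φ*(|u|) dμ ≤ max{‖u‖_{Φ*}^{ℓ*}, ‖u‖_{Φ*}^{m*}}. -/
open Filter Set MeasureTheory

/-- The Luxemburg norm `‖u‖_Ψ = inf{ λ > 0 : ∫_Ω Ψ(|u|/λ) dμ ≤ 1 }`. -/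
noncomputable def luxNorm {Ω : Type*} [MeasurableSpace Ω] (μ : Measure Ω)
    (Ψ : ℝ → ℝ) (u : Ω → ℝ) : ℝ :=
  sInf {lam : ℝ | 0 < lam ∧ (∫ x, Ψ (|u x| / lam) ∂μ) ≤ 1}

section Lemmas
open intervalIntegral

section Stage1
variable {φ : ℝ → ℝ} {ℓ m : ℝ}

lemma hP_C2 (hφ_C2 : ContDiffOn ℝ 2 φ (Set.Ioi 0)) :
    ContDiffOn ℝ 2 (fun s => s * φ s) (Set.Ioi (0:ℝ)) :=
  contDiffOn_id.mul hφ_C2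

lemma hA_C1 (hφ_C2 : ContDiffOn ℝ 2 φ (Set.Ioi 0)) :
    ContDiffOn ℝ 1 (deriv (fun s => s * φ s)) (Set.Ioi (0:ℝ)) :=
  (hP_C2 hφ_C2).deriv_of_isOpen isOpen_Ioi (by norm_num)

lemma hP_hasDeriv (hφ_C2 : ContDiffOn ℝ 2 φ (Set.Ioi 0)) {t : ℝ} (ht : t ∈ Set.Ioi (0:ℝ)) :
    HasDerivAt (fun s => s * φ s) (deriv (fun s => s * φ s) t) t := by
  have : DifferentiableAt ℝ (fun s => s * φ s) t :=
    (((hP_C2 hφ_C2).differentiableOn (by norm_num)) t ht).differentiableAt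
      (isOpen_Ioi.mem_nhds ht)
  exact this.hasDerivAt

lemma hA_hasDeriv (hφ_C2 : ContDiffOn ℝ 2 φ (Set.Ioi 0)) {t : ℝ} (ht : t ∈ Set.Ioi (0:ℝ)) :
    HasDerivAt (deriv (fun s => s * φ s)) (deriv (deriv (fun s => s * φ s)) t) t := by
  have : DifferentiableAt ℝ (deriv (fun s => s * φ s)) t :=
    (((hA_C1 hφ_C2).differentiableOn (by norm_num)) t ht).differentiableAt
      (isOpen_Ioi.mem_nhds ht)
  exact this.hasDerivAt

/-- FTC for P on a compact subinterval of (0,∞). -/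
lemma ftcP (hφ_C2 : ContDiffOn ℝ 2 φ (Set.Ioi 0)) {ε t : ℝ} (hε : 0 < ε) (hεt : ε ≤ t) :
    t * φ t - ε * φ ε = ∫ s in ε..t, deriv (fun s => s * φ s) s := by
  have h := intervalIntegral.integral_eq_sub_of_hasDerivAt
    (f := fun s => s * φ s) (f' := deriv (fun s => s * φ s)) (a := ε) (b := t)
    (fun x hx => by
      rw [Set.uIcc_of_le hεt] at hx
      exact hP_hasDeriv hφ_C2 (lt_of_lt_of_le hε hx.1))
    (((hA_C1 hφ_C2).continuousOn.mono (by
        rw [Set.uIcc_of_le hεt]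
        intro x hx; exact lt_of_lt_of_le hε hx.1)).intervalIntegrable)
  rw [h]

lemma A_intervalIntegrable (hφ_C2 : ContDiffOn ℝ 2 φ (Set.Ioi 0)) {ε t : ℝ} (hε : 0 < ε)
    (hεt : ε ≤ t) : IntervalIntegrable (deriv (fun s => s * φ s)) volume ε t :=
  ((hA_C1 hφ_C2).continuousOn.mono (by
      rw [Set.uIcc_of_le hεt]
      intro x hx; exact lt_of_lt_of_le hε hx.1)).intervalIntegrable

lemma oneDiv_intervalIntegrable {ε t : ℝ} (hε : 0 < ε) (hεt : ε ≤ t) :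
    IntervalIntegrable (fun s : ℝ => 1 / s) volume ε t :=
  ((continuousOn_const.div continuousOn_id (fun x hx => by
      rw [Set.uIcc_of_le hεt] at hx
      exact ne_of_gt (lt_of_lt_of_le hε hx.1))).intervalIntegrable)

/-- `t·A(t) ≤ (m-1)·t·φ(t)` on `(0,∞)`. -/
lemma key_m (hφ_pos : ∀ t > 0, 0 < φ t) (hφ_C2 : ContDiffOn ℝ 2 φ (Set.Ioi 0))
    (hℓ : 1 < ℓ) (hℓm : ℓ ≤ m)
    (hφ3 : ∀ t > 0,
      (ℓ - 2) * deriv (fun s => s * φ s) t ≤ t * deriv (deriv (fun s => s * φ s)) t ∧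
      t * deriv (deriv (fun s => s * φ s)) t ≤ (m - 2) * deriv (fun s => s * φ s) t)
    {t : ℝ} (ht : 0 < t) :
    t * deriv (fun s => s * φ s) t ≤ (m - 1) * (t * φ t) := by
  set A := deriv (fun s : ℝ => s * φ s) with hA
  set B := fun t : ℝ => t * A t - (m - 1) * (t * φ t) with hB
  -- B is antitone on Ioi 0
  have hBderiv : ∀ x ∈ Set.Ioi (0:ℝ), HasDerivAt B (x * deriv A x - (m - 2) * A x) x := by
    intro x hx
    have h1 : HasDerivAt (fun y : ℝ => y * A y) (1 * A x + x * deriv A x) x :=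
      (hasDerivAt_id x).mul (hA_hasDeriv hφ_C2 hx)
    have h2 : HasDerivAt (fun y : ℝ => (m - 1) * (y * φ y)) ((m - 1) * A x) x :=
      (hP_hasDeriv hφ_C2 hx).const_mul (m - 1)
    have : HasDerivAt (fun y : ℝ => y * A y - (m - 1) * (y * φ y)) _ x := h1.sub h2
    convert this using 1
    ring
  have hBanti : AntitoneOn B (Set.Ioi (0:ℝ)) := by
    apply antitoneOn_of_deriv_nonpos (convex_Ioi 0)
    · exact fun x hx => ((hBderiv x hx).continuousAt).continuousWithinAt
    · intro x hx
      rw [interior_Ioi] at hx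
      exact ((hBderiv x hx).differentiableAt).differentiableWithinAt
    · intro x hx
      rw [interior_Ioi] at hx
      rw [(hBderiv x hx).deriv]
      have := (hφ3 x hx).2
      linarith
  -- contradiction argument
  by_contra hcon
  push_neg at hcon
  set c := B t with hc
  have hcpos : 0 < c := by simp only [hc, hB]; linarith
  have hAge : ∀ s, 0 < s → s ≤ t → c / s ≤ A s := by
    intro s hs hst
    have h1 : c ≤ B s := hBanti hs ht hst
    have h2 : 0 < s * φ s := mul_pos hs (hφ_pos s hs)
    have hm1 : 0 < m - 1 := by linarith
    have : c ≤ s * A s := by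
      have : (m - 1) * (s * φ s) ≥ 0 := le_of_lt (mul_pos hm1 h2)
      simp only [hB] at h1; linarith
    rw [div_le_iff₀ hs]
    linarith [this]
  set ε := t * Real.exp (-(t * φ t + 1) / c) with hε
  have hεpos : 0 < ε := mul_pos ht (Real.exp_pos _)
  have hεlt : ε < t := by
    have : Real.exp (-(t * φ t + 1) / c) < 1 := by
      rw [Real.exp_lt_one_iff]
      apply div_neg_of_neg_of_pos _ hcpos
      have := mul_pos ht (hφ_pos t ht)
      linarith
    calc ε = t * Real.exp (-(t * φ t + 1) / c) := rfl
    _ < t * 1 := by exact mul_lt_mul_of_pos_left this ht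
    _ = t := mul_one t
  have hftc := ftcP hφ_C2 hεpos hεlt.le
  have hint : (∫ s in ε..t, c * (1 / s)) ≤ ∫ s in ε..t, A s := by
    apply intervalIntegral.integral_mono_on hεlt.le
      ((oneDiv_intervalIntegrable hεpos hεlt.le).const_mul c)
      (A_intervalIntegrable hφ_C2 hεpos hεlt.le)
    intro s hs
    have hs0 : 0 < s := lt_of_lt_of_le hεpos hs.1
    have := hAge s hs0 hs.2
    rw [mul_one_div]
    exact this
  have hlog : (∫ s in ε..t, c * (1 / s)) = c * Real.log (t / ε) := by
    rw [intervalIntegral.integral_const_mul, integral_one_div]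
    intro h0
    rw [Set.uIcc_of_le hεlt.le] at h0
    exact absurd h0.1 (not_le.mpr hεpos)
  have hlogval : Real.log (t / ε) = (t * φ t + 1) / c := by
    rw [hε]
    rw [show t / (t * Real.exp (-(t * φ t + 1) / c)) = Real.exp (-(-(t * φ t + 1) / c)) by
      rw [Real.exp_neg]; field_simp]
    rw [Real.log_exp]; ring
  have : t * φ t + 1 ≤ t * φ t - ε * φ ε := by
    rw [hftc]
    calc t * φ t + 1 = c * ((t * φ t + 1) / c) := by field_simp
    _ = c * Real.log (t / ε) := by rw [hlogval]
    _ = ∫ s in ε..t, c * (1 / s) := hlog.symm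
    _ ≤ ∫ s in ε..t, A s := hint
  have := mul_pos hεpos (hφ_pos ε hεpos)
  linarith
end Stage1

section SKeyL
variable {φ : ℝ → ℝ} {ℓ m : ℝ}

/-- `(ℓ-1)·t·φ(t) ≤ t·A(t)` on `(0,∞)`. -/
lemma key_l (hφ_pos : ∀ t > 0, 0 < φ t) (hφ_C2 : ContDiffOn ℝ 2 φ (Set.Ioi 0))
    (hℓ : 1 < ℓ)
    (hφ1₀ : Tendsto (fun t => t * φ t) (nhdsWithin 0 (Set.Ioi 0)) (nhds 0))
    (hφ2 : StrictMonoOn (fun t => t * φ t) (Set.Ioi 0))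
    (hφ3 : ∀ t > 0,
      (ℓ - 2) * deriv (fun s => s * φ s) t ≤ t * deriv (deriv (fun s => s * φ s)) t ∧
      t * deriv (deriv (fun s => s * φ s)) t ≤ (m - 2) * deriv (fun s => s * φ s) t)
    {t : ℝ} (ht : 0 < t) :
    (ℓ - 1) * (t * φ t) ≤ t * deriv (fun s => s * φ s) t := by
  set A := deriv (fun s : ℝ => s * φ s) with hA
  set C := fun t : ℝ => t * A t - (ℓ - 1) * (t * φ t) with hC
  have hCderiv : ∀ x ∈ Set.Ioi (0:ℝ), HasDerivAt C (x * deriv A x - (ℓ - 2) * A x) x := by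
    intro x hx
    have h1 : HasDerivAt (fun y : ℝ => y * A y) (1 * A x + x * deriv A x) x :=
      (hasDerivAt_id x).mul (hA_hasDeriv hφ_C2 hx)
    have h2 : HasDerivAt (fun y : ℝ => (ℓ - 1) * (y * φ y)) ((ℓ - 1) * A x) x :=
      (hP_hasDeriv hφ_C2 hx).const_mul (ℓ - 1)
    have : HasDerivAt (fun y : ℝ => y * A y - (ℓ - 1) * (y * φ y)) _ x := h1.sub h2
    convert this using 1
    ring
  have hCmono : MonotoneOn C (Set.Ioi (0:ℝ)) := by
    apply monotoneOn_of_deriv_nonneg (convex_Ioi 0)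
    · exact fun x hx => ((hCderiv x hx).continuousAt).continuousWithinAt
    · intro x hx
      rw [interior_Ioi] at hx
      exact ((hCderiv x hx).differentiableAt).differentiableWithinAt
    · intro x hx
      rw [interior_Ioi] at hx
      rw [(hCderiv x hx).deriv]
      have := (hφ3 x hx).1
      linarith
  by_contra hcon
  push_neg at hcon
  set c := -(C t) with hc
  have hcpos : 0 < c := by simp only [hc, hC]; linarith
  -- find δ on which (ℓ-1)*(s*φ s) < c/2
  have hev : ∀ᶠ s in nhdsWithin 0 (Set.Ioi 0), (ℓ - 1) * (s * φ s) < c / 2 := by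
    have hlim : Tendsto (fun s => (ℓ - 1) * (s * φ s)) (nhdsWithin 0 (Set.Ioi 0))
        (nhds ((ℓ - 1) * 0)) := hφ1₀.const_mul (ℓ - 1)
    rw [mul_zero] at hlim
    exact hlim.eventually (Filter.Tendsto.eventually_lt_const (by positivity) tendsto_id)
  obtain ⟨δ₀, hδ₀, hδsub⟩ := mem_nhdsGT_iff_exists_Ioc_subset.mp hev
  set δ := min δ₀ t with hδdef
  have hδpos : 0 < δ := lt_min hδ₀ ht
  have hδt : δ ≤ t := min_le_right _ _
  have hAle : ∀ s, 0 < s → s ≤ δ → A s ≤ -c / 2 * (1 / s) := by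
    intro s hs hsδ
    have h1 : C s ≤ C t := hCmono hs ht (le_trans hsδ hδt)
    have h2 : (ℓ - 1) * (s * φ s) < c / 2 :=
      hδsub ⟨hs, le_trans hsδ (min_le_left _ _)⟩
    have h3 : s * A s ≤ -c / 2 := by
      have hCs : s * A s - (ℓ - 1) * (s * φ s) ≤ C t := h1
      have hct : C t = -c := by rw [hc]; ring
      have h4 : s * A s - (ℓ - 1) * (s * φ s) ≤ -c := hct ▸ hCs
      have h5 : s * A s ≤ -c + (ℓ - 1) * (s * φ s) := by linarith
      clear_value c
      linarith
    rw [mul_one_div, le_div_iff₀ hs]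
    linarith [mul_comm (A s) s]
  set ε := δ * Real.exp (-(2 / c) * (δ * φ δ + 1)) with hε
  have hεpos : 0 < ε := mul_pos hδpos (Real.exp_pos _)
  have hεlt : ε < δ := by
    have hP : 0 < δ * φ δ := mul_pos hδpos (hφ_pos δ hδpos)
    have : Real.exp (-(2 / c) * (δ * φ δ + 1)) < 1 := by
      rw [Real.exp_lt_one_iff]
      have : 0 < 2 / c := by positivity
      nlinarith
    calc ε = δ * Real.exp (-(2 / c) * (δ * φ δ + 1)) := rfl
    _ < δ * 1 := mul_lt_mul_of_pos_left this hδpos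
    _ = δ := mul_one δ
  have hftc := ftcP hφ_C2 hεpos hεlt.le
  have hint : (∫ s in ε..δ, A s) ≤ ∫ s in ε..δ, -c / 2 * (1 / s) := by
    apply intervalIntegral.integral_mono_on hεlt.le
      (A_intervalIntegrable hφ_C2 hεpos hεlt.le)
      ((oneDiv_intervalIntegrable hεpos hεlt.le).const_mul (-c / 2))
    intro s hs
    exact hAle s (lt_of_lt_of_le hεpos hs.1) hs.2
  have hlog : (∫ s in ε..δ, -c / 2 * (1 / s)) = -c / 2 * Real.log (δ / ε) := by
    rw [intervalIntegral.integral_const_mul, integral_one_div]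
    intro h0
    rw [Set.uIcc_of_le hεlt.le] at h0
    exact absurd h0.1 (not_le.mpr hεpos)
  have hlogval : Real.log (δ / ε) = (2 / c) * (δ * φ δ + 1) := by
    rw [hε]
    rw [show δ / (δ * Real.exp (-(2 / c) * (δ * φ δ + 1)))
        = Real.exp ((2 / c) * (δ * φ δ + 1)) by
      rw [show -(2 / c) * (δ * φ δ + 1) = -((2 / c) * (δ * φ δ + 1)) by ring, Real.exp_neg]
      field_simp]
    rw [Real.log_exp]
  have hkey : δ * φ δ - ε * φ ε ≤ -(δ * φ δ + 1) := by
    rw [hftc]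
    calc (∫ s in ε..δ, A s) ≤ -c / 2 * Real.log (δ / ε) := le_trans hint (le_of_eq hlog)
    _ = -c / 2 * ((2 / c) * (δ * φ δ + 1)) := by rw [hlogval]
    _ = -(δ * φ δ + 1) := by field_simp
  have hmono : ε * φ ε < δ * φ δ := hφ2 (Set.mem_Ioi.mpr hεpos) (Set.mem_Ioi.mpr hδpos) hεlt
  have : 0 < δ * φ δ := mul_pos hδpos (hφ_pos δ hδpos)
  linarith

end SKeyL

section SPhi
variable {φ : ℝ → ℝ} {ℓ m : ℝ}

lemma P_mono (hφ2 : StrictMonoOn (fun t => t * φ t) (Set.Ioi 0)) {s t : ℝ}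
    (hs : 0 < s) (hst : s ≤ t) : s * φ s ≤ t * φ t := by
  rcases eq_or_lt_of_le hst with h | h
  · rw [h]
  · exact le_of_lt (hφ2 (Set.mem_Ioi.mpr hs) (Set.mem_Ioi.mpr (lt_trans hs h)) h)

lemma P_contOn (hφ_C2 : ContDiffOn ℝ 2 φ (Set.Ioi 0)) :
    ContinuousOn (fun s => s * φ s) (Set.Ioi (0:ℝ)) :=
  continuousOn_id.mul hφ_C2.continuousOn

lemma P_intInt (hφ_pos : ∀ t > 0, 0 < φ t) (hφ_C2 : ContDiffOn ℝ 2 φ (Set.Ioi 0))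
    (hφ2 : StrictMonoOn (fun t => t * φ t) (Set.Ioi 0)) {t : ℝ} (ht : 0 < t) :
    IntervalIntegrable (fun s => s * φ s) volume 0 t := by
  rw [intervalIntegrable_iff_integrableOn_Ioc_of_le ht.le]
  apply MeasureTheory.Integrable.mono' (g := fun _ => t * φ t)
    (integrableOn_const measure_Ioc_lt_top.ne)
  · exact ((P_contOn hφ_C2).mono Set.Ioc_subset_Ioi_self).aestronglyMeasurable measurableSet_Ioc
  · filter_upwards [MeasureTheory.ae_restrict_mem measurableSet_Ioc] with s hs
    rw [Real.norm_eq_abs, abs_of_nonneg (le_of_lt (mul_pos hs.1 (hφ_pos s hs.1)))]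
    exact P_mono hφ2 hs.1 hs.2

lemma Phi_hasDeriv (hφ_pos : ∀ t > 0, 0 < φ t) (hφ_C2 : ContDiffOn ℝ 2 φ (Set.Ioi 0))
    (hφ2 : StrictMonoOn (fun t => t * φ t) (Set.Ioi 0)) {t : ℝ} (ht : 0 < t) :
    HasDerivAt (Phi φ) (t * φ t) t := by
  exact intervalIntegral.integral_hasDerivAt_right (P_intInt hφ_pos hφ_C2 hφ2 ht)
    (((P_contOn hφ_C2).stronglyMeasurableAtFilter isOpen_Ioi (μ := volume)) t ht)
    (((P_contOn hφ_C2) t ht).continuousAt (isOpen_Ioi.mem_nhds ht))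

lemma Phi_nonneg (hφ_pos : ∀ t > 0, 0 < φ t) {t : ℝ} (ht : 0 ≤ t) : 0 ≤ Phi φ t := by
  apply intervalIntegral.integral_nonneg ht
  intro s hs
  rcases eq_or_lt_of_le hs.1 with h | h
  · simp [← h]
  · exact le_of_lt (mul_pos h (hφ_pos s h))

lemma Phi_le (hφ_pos : ∀ t > 0, 0 < φ t) (hφ_C2 : ContDiffOn ℝ 2 φ (Set.Ioi 0))
    (hφ2 : StrictMonoOn (fun t => t * φ t) (Set.Ioi 0)) {t : ℝ} (ht : 0 < t) :
    Phi φ t ≤ t * (t * φ t) := by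
  have h := intervalIntegral.integral_mono_on ht.le (P_intInt hφ_pos hφ_C2 hφ2 ht)
    (_root_.intervalIntegrable_const (c := t * φ t)) (fun s hs => ?_)
  · simpa [Phi] using h
  · rcases eq_or_lt_of_le hs.1 with h | h
    · rw [← h]; simp
      exact le_of_lt (mul_pos ht (hφ_pos t ht))
    · exact P_mono hφ2 h hs.2
end SPhi

section S2
variable {φ : ℝ → ℝ} {ℓ m : ℝ}

/-- key2 upper: `t·P(t) ≤ m·Φ(t)` for `t>0`. -/
lemma key2_m (hφ_pos : ∀ t > 0, 0 < φ t) (hφ_C2 : ContDiffOn ℝ 2 φ (Set.Ioi 0))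
    (hℓ : 1 < ℓ) (hℓm : ℓ ≤ m)
    (hφ1₀ : Tendsto (fun t => t * φ t) (nhdsWithin 0 (Set.Ioi 0)) (nhds 0))
    (hφ2 : StrictMonoOn (fun t => t * φ t) (Set.Ioi 0))
    (hkm : ∀ t : ℝ, 0 < t → t * deriv (fun s => s * φ s) t ≤ (m - 1) * (t * φ t))
    {t : ℝ} (ht : 0 < t) :
    t * (t * φ t) ≤ m * Phi φ t := by
  set D := fun t : ℝ => t * (t * φ t) - m * Phi φ t with hD
  have hDderiv : ∀ x ∈ Set.Ioi (0:ℝ),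
      HasDerivAt D (x * deriv (fun s => s * φ s) x - (m - 1) * (x * φ x)) x := by
    intro x hx
    have h1 : HasDerivAt (fun y : ℝ => y * (y * φ y))
        (1 * (x * φ x) + x * deriv (fun s => s * φ s) x) x :=
      (hasDerivAt_id x).mul (hP_hasDeriv hφ_C2 hx)
    have h2 : HasDerivAt (fun y : ℝ => m * Phi φ y) (m * (x * φ x)) x :=
      (Phi_hasDeriv hφ_pos hφ_C2 hφ2 hx).const_mul m
    have : HasDerivAt (fun y : ℝ => y * (y * φ y) - m * Phi φ y) _ x := h1.sub h2
    convert this using 1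
    ring
  have hDanti : AntitoneOn D (Set.Ioi (0:ℝ)) := by
    apply antitoneOn_of_deriv_nonpos (convex_Ioi 0)
    · exact fun x hx => ((hDderiv x hx).continuousAt).continuousWithinAt
    · intro x hx
      rw [interior_Ioi] at hx
      exact ((hDderiv x hx).differentiableAt).differentiableWithinAt
    · intro x hx
      rw [interior_Ioi] at hx
      rw [(hDderiv x hx).deriv]
      have := hkm x hx
      linarith
  -- D t ≤ s * (s * φ s) for all 0 < s ≤ t
  by_contra hcon
  push_neg at hcon
  have hc : 0 < D t := by simp only [hD]; linarith
  have hbound : ∀ s, 0 < s → s ≤ t → D t ≤ s * (s * φ s) := by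
    intro s hs hst
    have h1 : D t ≤ D s := hDanti (Set.mem_Ioi.mpr hs) (Set.mem_Ioi.mpr ht) hst
    have h2 : 0 ≤ Phi φ s := Phi_nonneg hφ_pos hs.le
    have hm : 0 < m := by linarith
    have : D s ≤ s * (s * φ s) := by
      simp only [hD]; nlinarith
    linarith
  -- choose s small
  set s := min t (D t / (2 * (t * φ t))) with hs
  have hPt : 0 < t * φ t := mul_pos ht (hφ_pos t ht)
  have hspos : 0 < s := lt_min ht (by positivity)
  have hst : s ≤ t := min_le_left _ _
  have h1 := hbound s hspos hst
  have h2 : s * (s * φ s) ≤ s * (t * φ t) :=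
    mul_le_mul_of_nonneg_left (P_mono hφ2 hspos hst) hspos.le
  have h3 : s * (t * φ t) ≤ (D t / (2 * (t * φ t))) * (t * φ t) :=
    mul_le_mul_of_nonneg_right (min_le_right _ _) hPt.le
  have h4 : (D t / (2 * (t * φ t))) * (t * φ t) = D t / 2 := by
    rw [div_mul_eq_mul_div, mul_div_mul_right _ _ hPt.ne']
  clear_value D
  linarith

/-- key2 lower: `ℓ·Φ(t) ≤ t·P(t)` for `t>0`. -/
lemma key2_l (hφ_pos : ∀ t > 0, 0 < φ t) (hφ_C2 : ContDiffOn ℝ 2 φ (Set.Ioi 0))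
    (hℓ : 1 < ℓ)
    (hφ2 : StrictMonoOn (fun t => t * φ t) (Set.Ioi 0))
    (hkl : ∀ t : ℝ, 0 < t → (ℓ - 1) * (t * φ t) ≤ t * deriv (fun s => s * φ s) t)
    {t : ℝ} (ht : 0 < t) :
    ℓ * Phi φ t ≤ t * (t * φ t) := by
  set E := fun t : ℝ => t * (t * φ t) - ℓ * Phi φ t with hE
  have hEderiv : ∀ x ∈ Set.Ioi (0:ℝ),
      HasDerivAt E (x * deriv (fun s => s * φ s) x - (ℓ - 1) * (x * φ x)) x := by
    intro x hx
    have h1 : HasDerivAt (fun y : ℝ => y * (y * φ y))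
        (1 * (x * φ x) + x * deriv (fun s => s * φ s) x) x :=
      (hasDerivAt_id x).mul (hP_hasDeriv hφ_C2 hx)
    have h2 : HasDerivAt (fun y : ℝ => ℓ * Phi φ y) (ℓ * (x * φ x)) x :=
      (Phi_hasDeriv hφ_pos hφ_C2 hφ2 hx).const_mul ℓ
    have : HasDerivAt (fun y : ℝ => y * (y * φ y) - ℓ * Phi φ y) _ x := h1.sub h2
    convert this using 1
    ring
  have hEmono : MonotoneOn E (Set.Ioi (0:ℝ)) := by
    apply monotoneOn_of_deriv_nonneg (convex_Ioi 0)
    · exact fun x hx => ((hEderiv x hx).continuousAt).continuousWithinAt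
    · intro x hx
      rw [interior_Ioi] at hx
      exact ((hEderiv x hx).differentiableAt).differentiableWithinAt
    · intro x hx
      rw [interior_Ioi] at hx
      rw [(hEderiv x hx).deriv]
      have := hkl x hx
      linarith
  by_contra hcon
  push_neg at hcon
  have hc : E t < 0 := by simp only [hE]; linarith
  have hbound : ∀ s, 0 < s → s ≤ t → -(ℓ * (s * (s * φ s))) ≤ E t := by
    intro s hs hst
    have h1 : E s ≤ E t := hEmono (Set.mem_Ioi.mpr hs) (Set.mem_Ioi.mpr ht) hst
    have h2 : Phi φ s ≤ s * (s * φ s) := Phi_le hφ_pos hφ_C2 hφ2 hs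
    have h3 : 0 ≤ s * (s * φ s) := le_of_lt (mul_pos hs (mul_pos hs (hφ_pos s hs)))
    have hl : 0 < ℓ := by linarith
    have : -(ℓ * (s * (s * φ s))) ≤ E s := by
      simp only [hE]; nlinarith [mul_pos hs (hφ_pos s hs)]
    linarith
  set s := min t (-E t / (2 * ℓ * (t * φ t))) with hs
  have hPt : 0 < t * φ t := mul_pos ht (hφ_pos t ht)
  have hl : 0 < ℓ := by linarith
  have hspos : 0 < s := lt_min ht (div_pos (by linarith) (by positivity))
  have hst : s ≤ t := min_le_left _ _
  have h1 := hbound s hspos hst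
  have h2 : s * (s * φ s) ≤ s * (t * φ t) :=
    mul_le_mul_of_nonneg_left (P_mono hφ2 hspos hst) hspos.le
  have h3 : s * (t * φ t) ≤ (-E t / (2 * ℓ * (t * φ t))) * (t * φ t) :=
    mul_le_mul_of_nonneg_right (min_le_right _ _) hPt.le
  have h4 : (-E t / (2 * ℓ * (t * φ t))) * (t * φ t) = -E t / (2 * ℓ) := by
    rw [div_mul_eq_mul_div, mul_div_mul_right _ _ hPt.ne']
  have h5 : s * (s * φ s) ≤ -E t / (2 * ℓ) := by linarith
  have h6 : ℓ * (s * (s * φ s)) ≤ ℓ * (-E t / (2 * ℓ)) :=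
    mul_le_mul_of_nonneg_left h5 hl.le
  have h7 : ℓ * (-E t / (2 * ℓ)) = -E t / 2 := by
    field_simp
  clear_value E
  linarith
end S2

section S3
variable {φ : ℝ → ℝ} {ℓ m : ℝ}

lemma Phi_pos (hφ_pos : ∀ t > 0, 0 < φ t) (hm : 0 < m)
    (hk2m : ∀ t : ℝ, 0 < t → t * (t * φ t) ≤ m * Phi φ t)
    {t : ℝ} (ht : 0 < t) : 0 < Phi φ t := by
  have h1 := hk2m t ht
  have h2 : 0 < t * (t * φ t) := mul_pos ht (mul_pos ht (hφ_pos t ht))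
  nlinarith

lemma Phi_strictMono (hφ_pos : ∀ t > 0, 0 < φ t) (hφ_C2 : ContDiffOn ℝ 2 φ (Set.Ioi 0))
    (hφ2 : StrictMonoOn (fun t => t * φ t) (Set.Ioi 0)) :
    StrictMonoOn (Phi φ) (Set.Ici (0:ℝ)) := by
  intro a ha b hb hab
  have hb0 : 0 < b := lt_of_le_of_lt ha hab
  have hint_b := P_intInt hφ_pos hφ_C2 hφ2 hb0
  have hint_ab : IntervalIntegrable (fun s => s * φ s) volume a b := by
    apply hint_b.mono_set
    rw [Set.uIcc_of_le hab.le, Set.uIcc_of_le hb0.le]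
    exact Set.Icc_subset_Icc ha le_rfl
  have hint_0a : IntervalIntegrable (fun s => s * φ s) volume 0 a := by
    apply hint_b.mono_set
    rw [Set.uIcc_of_le ha, Set.uIcc_of_le hb0.le]
    exact Set.Icc_subset_Icc le_rfl (le_of_lt hab)
  have hsplit : Phi φ a + (∫ s in a..b, s * φ s) = Phi φ b :=
    intervalIntegral.integral_add_adjacent_intervals hint_0a hint_ab
  have hpos : 0 < ∫ s in a..b, s * φ s := by
    apply intervalIntegral.intervalIntegral_pos_of_pos_on hint_ab _ hab
    intro x hx
    have hx0 : 0 < x := lt_of_le_of_lt ha hx.1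
    exact mul_pos hx0 (hφ_pos x hx0)
  linarith

lemma Phi_zero : Phi φ 0 = 0 := intervalIntegral.integral_same

/-- Scaling of Phi. -/
lemma Phi_scale (hφ_pos : ∀ t > 0, 0 < φ t) (hφ_C2 : ContDiffOn ℝ 2 φ (Set.Ioi 0))
    (hℓ : 1 < ℓ) (hℓm : ℓ ≤ m)
    (hφ2 : StrictMonoOn (fun t => t * φ t) (Set.Ioi 0))
    (hk2m : ∀ t : ℝ, 0 < t → t * (t * φ t) ≤ m * Phi φ t)
    (hk2l : ∀ t : ℝ, 0 < t → ℓ * Phi φ t ≤ t * (t * φ t))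
    {t lam : ℝ} (ht : 0 < t) (hlam : 1 ≤ lam) :
    lam ^ ℓ * Phi φ t ≤ Phi φ (lam * t) ∧ Phi φ (lam * t) ≤ lam ^ m * Phi φ t := by
  have hlam0 : 0 < lam := lt_of_lt_of_le one_pos hlam
  have hlt : t ≤ lam * t := by nlinarith
  have hmono : ∀ c : ℝ, (∀ x : ℝ, 0 < x → c * Phi φ x ≤ x * (x * φ x)) →
      MonotoneOn (fun x => Phi φ x * x ^ (-c : ℝ)) (Set.Ioi (0:ℝ)) := by
    intro c hc
    apply monotoneOn_of_deriv_nonneg (convex_Ioi 0)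
    · intro x hx
      exact (((Phi_hasDeriv hφ_pos hφ_C2 hφ2 hx).mul
        (Real.hasDerivAt_rpow_const (Or.inl (ne_of_gt hx)))).continuousAt).continuousWithinAt
    · intro x hx
      rw [interior_Ioi] at hx
      exact (((Phi_hasDeriv hφ_pos hφ_C2 hφ2 hx).mul
        (Real.hasDerivAt_rpow_const (Or.inl (ne_of_gt hx)))).differentiableAt).differentiableWithinAt
    · intro x hx
      rw [interior_Ioi] at hx
      rw [show deriv (fun x => Phi φ x * x ^ (-c:ℝ)) x = _ from ((Phi_hasDeriv hφ_pos hφ_C2 hφ2 hx).mul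
        (Real.hasDerivAt_rpow_const (Or.inl (ne_of_gt hx)))).deriv]
      have hre : x * φ x * x ^ (-c:ℝ) + Phi φ x * (-c * x ^ ((-c:ℝ) - 1))
          = x ^ ((-c:ℝ) - 1) * (x * (x * φ x) - c * Phi φ x) := by
        have h1 : x ^ (-c:ℝ) = x ^ ((-c:ℝ) - 1) * x := by
          rw [← Real.rpow_add_one (ne_of_gt hx) ((-c:ℝ) - 1)]
          norm_num
        rw [h1]; ring
      rw [hre]
      exact mul_nonneg (le_of_lt (Real.rpow_pos_of_pos hx _)) (by linarith [hc x hx])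
  have hanti : ∀ c : ℝ, (∀ x : ℝ, 0 < x → x * (x * φ x) ≤ c * Phi φ x) →
      AntitoneOn (fun x => Phi φ x * x ^ (-c : ℝ)) (Set.Ioi (0:ℝ)) := by
    intro c hc
    apply antitoneOn_of_deriv_nonpos (convex_Ioi 0)
    · intro x hx
      exact (((Phi_hasDeriv hφ_pos hφ_C2 hφ2 hx).mul
        (Real.hasDerivAt_rpow_const (Or.inl (ne_of_gt hx)))).continuousAt).continuousWithinAt
    · intro x hx
      rw [interior_Ioi] at hx
      exact (((Phi_hasDeriv hφ_pos hφ_C2 hφ2 hx).mul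
        (Real.hasDerivAt_rpow_const (Or.inl (ne_of_gt hx)))).differentiableAt).differentiableWithinAt
    · intro x hx
      rw [interior_Ioi] at hx
      rw [show deriv (fun x => Phi φ x * x ^ (-c:ℝ)) x = _ from ((Phi_hasDeriv hφ_pos hφ_C2 hφ2 hx).mul
        (Real.hasDerivAt_rpow_const (Or.inl (ne_of_gt hx)))).deriv]
      have hre : x * φ x * x ^ (-c:ℝ) + Phi φ x * (-c * x ^ ((-c:ℝ) - 1))
          = x ^ ((-c:ℝ) - 1) * (x * (x * φ x) - c * Phi φ x) := by
        have h1 : x ^ (-c:ℝ) = x ^ ((-c:ℝ) - 1) * x := by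
          rw [← Real.rpow_add_one (ne_of_gt hx) ((-c:ℝ) - 1)]
          norm_num
        rw [h1]; ring
      rw [hre]
      exact mul_nonpos_of_nonneg_of_nonpos (le_of_lt (Real.rpow_pos_of_pos hx _))
        (by linarith [hc x hx])
  have hltm : 0 < lam * t := by positivity
  constructor
  · have h := hmono ℓ hk2l ht (Set.mem_Ioi.mpr hltm) hlt
    simp only at h
    -- Phi t * t^(-ℓ) ≤ Phi (lam t) * (lam t)^(-ℓ)
    have hfac : (lam * t) ^ (-ℓ:ℝ) * (lam * t) ^ (ℓ:ℝ) = 1 := by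
      rw [← Real.rpow_add hltm]; simp
    have h2 := mul_le_mul_of_nonneg_right h (le_of_lt (Real.rpow_pos_of_pos hltm ℓ))
    calc lam ^ ℓ * Phi φ t
        = Phi φ t * t ^ (-ℓ:ℝ) * (lam * t) ^ (ℓ:ℝ) := by
          rw [Real.mul_rpow hlam0.le ht.le, Real.rpow_neg ht.le]
          have : (t:ℝ) ^ (ℓ:ℝ) ≠ 0 := ne_of_gt (Real.rpow_pos_of_pos ht ℓ)
          field_simp
      _ ≤ Phi φ (lam * t) * (lam * t) ^ (-ℓ:ℝ) * (lam * t) ^ (ℓ:ℝ) := h2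
      _ = Phi φ (lam * t) := by rw [mul_assoc, hfac, mul_one]
  · have h := hanti m hk2m ht (Set.mem_Ioi.mpr hltm) hlt
    simp only at h
    have hfac : (lam * t) ^ (-m:ℝ) * (lam * t) ^ (m:ℝ) = 1 := by
      rw [← Real.rpow_add hltm]; simp
    have h2 := mul_le_mul_of_nonneg_right h (le_of_lt (Real.rpow_pos_of_pos hltm m))
    calc Phi φ (lam * t)
        = Phi φ (lam * t) * (lam * t) ^ (-m:ℝ) * (lam * t) ^ (m:ℝ) := by
          rw [mul_assoc, hfac, mul_one]
      _ ≤ Phi φ t * t ^ (-m:ℝ) * (lam * t) ^ (m:ℝ) := h2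
      _ = lam ^ m * Phi φ t := by
          rw [Real.mul_rpow hlam0.le ht.le, Real.rpow_neg ht.le]
          have : (t:ℝ) ^ (m:ℝ) ≠ 0 := ne_of_gt (Real.rpow_pos_of_pos ht m)
          field_simp
end S3

section S5
variable {φ : ℝ → ℝ} {ℓ m N : ℝ} {Phinv : ℝ → ℝ}

lemma Phi_zero' : Phi φ 0 = 0 := intervalIntegral.integral_same

/-- All the Phinv facts we need, packaged. -/
lemma Phinv_facts
    (hPhiSM : StrictMonoOn (Phi φ) (Set.Ici (0:ℝ)))
    (hscale : ∀ t lam : ℝ, 0 < t → 1 ≤ lam →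
      lam ^ ℓ * Phi φ t ≤ Phi φ (lam * t) ∧ Phi φ (lam * t) ≤ lam ^ m * Phi φ t)
    (hℓ : 0 < ℓ) (hm : 0 < m)
    (hPhinv : ∀ s ∈ Set.Ici (0:ℝ), 0 ≤ Phinv s ∧ Phi φ (Phinv s) = s)
    (hPhinv2 : ∀ t ∈ Set.Ici (0:ℝ), Phinv (Phi φ t) = t) :
    Phinv 0 = 0 ∧ (∀ s : ℝ, 0 < s → 0 < Phinv s) ∧
    (∀ s lam : ℝ, 0 ≤ s → 1 ≤ lam →
      lam ^ (1/m) * Phinv s ≤ Phinv (lam * s) ∧ Phinv (lam * s) ≤ lam ^ (1/ℓ) * Phinv s) := by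
  have h0 : Phinv 0 = 0 := by
    have := hPhinv2 0 (Set.mem_Ici.mpr le_rfl)
    rwa [Phi_zero'] at this
  have hpos : ∀ s : ℝ, 0 < s → 0 < Phinv s := by
    intro s hs
    rcases lt_or_eq_of_le (hPhinv s (Set.mem_Ici.mpr hs.le)).1 with h | h
    · exact h
    · exfalso
      have h2 := (hPhinv s (Set.mem_Ici.mpr hs.le)).2
      rw [← h, Phi_zero'] at h2
      linarith
  refine ⟨h0, hpos, fun s lam hs hlam => ?_⟩
  have hlam0 : (0:ℝ) < lam := lt_of_lt_of_le one_pos hlam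
  rcases eq_or_lt_of_le hs with h | h
  · rw [← h, mul_zero, h0, mul_zero]
    constructor <;> simp
  · set x := Phinv s with hx
    have hxpos : 0 < x := hpos s h
    have hPhix : Phi φ x = s := (hPhinv s (Set.mem_Ici.mpr hs)).2
    have hls : 0 ≤ lam * s := by positivity
    have hymem := hPhinv (lam * s) (Set.mem_Ici.mpr hls)
    -- reflection lemma
    have hrefl : ∀ a b : ℝ, 0 ≤ a → 0 ≤ b → Phi φ a ≤ Phi φ b → a ≤ b := by
      intro a b ha hb hab
      by_contra hcon
      push_neg at hcon
      exact absurd (hPhiSM (Set.mem_Ici.mpr hb) (Set.mem_Ici.mpr ha) hcon) (not_lt.mpr hab)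
    constructor
    · -- lam^(1/m) * x ≤ Phinv (lam * s)
      apply hrefl _ _ (by positivity) hymem.1
      have h1 := (hscale x (lam ^ (1/m)) hxpos (Real.one_le_rpow hlam (by positivity))).2
      have h2 : (lam ^ (1/m)) ^ m = lam := by
        rw [← Real.rpow_mul hlam0.le, one_div, inv_mul_cancel₀ (ne_of_gt hm), Real.rpow_one]
      rw [h2, hPhix] at h1
      rw [hymem.2]
      exact h1
    · -- Phinv (lam * s) ≤ lam^(1/ℓ) * x
      apply hrefl _ _ hymem.1 (by positivity)
      have h1 := (hscale x (lam ^ (1/ℓ)) hxpos (Real.one_le_rpow hlam (by positivity))).1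
      have h2 : (lam ^ (1/ℓ)) ^ ℓ = lam := by
        rw [← Real.rpow_mul hlam0.le, one_div, inv_mul_cancel₀ (ne_of_gt hℓ), Real.rpow_one]
      rw [h2, hPhix] at h1
      rw [hymem.2]
      exact h1
end S5

section S6
variable {ℓ m N : ℝ} {Phinv : ℝ → ℝ}

lemma g_meas_ae {s : ℝ}
    (hmono : MonotoneOn Phinv (Set.Ici (0:ℝ))) (hnn : ∀ r : ℝ, 0 ≤ r → 0 ≤ Phinv r) :
    AEStronglyMeasurable (fun r => Phinv r * r ^ (-(N + 1) / N))
      (volume.restrict (Set.Ioc 0 s)) := by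
  have hmeas : Measurable fun r : ℝ => Phinv (max r 0) * r ^ (-(N + 1) / N) := by
    apply Measurable.mul _ (measurable_id'.pow_const _)
    have hm2 : Monotone fun r : ℝ => Phinv (max r 0) := by
      intro a b hab
      exact hmono (Set.mem_Ici.mpr (le_max_right a 0)) (Set.mem_Ici.mpr (le_max_right b 0))
        (max_le_max hab le_rfl)
    exact hm2.measurable
  apply (hmeas.aestronglyMeasurable).congr
  filter_upwards [MeasureTheory.ae_restrict_mem measurableSet_Ioc] with r hr
  rw [max_eq_left hr.1.le]

lemma inv_monoOn {F g : ℝ → ℝ}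
    (hSM : StrictMonoOn F (Set.Ici (0:ℝ)))
    (hg : ∀ s ∈ Set.Ici (0:ℝ), 0 ≤ g s ∧ F (g s) = s) :
    MonotoneOn g (Set.Ici (0:ℝ)) := by
  intro a ha b hb hab
  by_contra hcon
  push_neg at hcon
  have := hSM (Set.mem_Ici.mpr (hg b hb).1) (Set.mem_Ici.mpr (hg a ha).1) hcon
  rw [(hg a ha).2, (hg b hb).2] at this
  exact absurd this (not_lt.mpr hab)

lemma g_intInt (hm : 0 < m) (hmN : m < N)
    (hmono : MonotoneOn Phinv (Set.Ici (0:ℝ))) (hnn : ∀ r : ℝ, 0 ≤ r → 0 ≤ Phinv r)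
    (hinvscale : ∀ s lam : ℝ, 0 ≤ s → 1 ≤ lam →
      lam ^ (1/m) * Phinv s ≤ Phinv (lam * s) ∧ Phinv (lam * s) ≤ lam ^ (1/ℓ) * Phinv s)
    {s : ℝ} (hs : 0 < s) :
    IntervalIntegrable (fun r => Phinv r * r ^ (-(N + 1) / N)) volume 0 s := by
  have hN0 : 0 < N := lt_trans hm hmN
  set p := (1:ℝ)/m with hp
  set e := -(N + 1) / N with he
  have hexp : (-1:ℝ) < p + e := by
    have h1 : (1:ℝ)/N < 1/m := one_div_lt_one_div_of_lt hm hmN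
    have h2 : e = -1 - 1/N := by rw [he]; field_simp; ring
    rw [h2, hp]; linarith
  rw [intervalIntegrable_iff_integrableOn_Ioc_of_le hs.le]
  have hC : 0 ≤ Phinv s * (s ^ p)⁻¹ := by
    have := hnn s hs.le
    have := Real.rpow_pos_of_pos hs p
    positivity
  have hdom : IntervalIntegrable
      (fun r : ℝ => (Phinv s * (s ^ p)⁻¹) * r ^ (p + e)) volume 0 s :=
    (intervalIntegrable_rpow' hexp).const_mul _
  rw [intervalIntegrable_iff_integrableOn_Ioc_of_le hs.le] at hdom
  apply hdom.mono' (g_meas_ae hmono hnn)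
  filter_upwards [MeasureTheory.ae_restrict_mem measurableSet_Ioc] with r hr
  have hr0 : 0 < r := hr.1
  have ha : (0:ℝ) < r ^ p := Real.rpow_pos_of_pos hr0 p
  have hb0 : (0:ℝ) < s ^ p := Real.rpow_pos_of_pos hs p
  -- Phinv r ≤ Phinv s * (s^p)⁻¹ * r^p
  have hkey : Phinv r ≤ Phinv s * (s ^ p)⁻¹ * r ^ p := by
    have hlam : 1 ≤ s / r := (one_le_div hr0).mpr hr.2
    have h1 := (hinvscale r (s/r) hr0.le hlam).1
    rw [div_mul_cancel₀ _ (ne_of_gt hr0), Real.div_rpow hs.le hr0.le] at h1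
    have h2 : s ^ p * Phinv r ≤ Phinv s * r ^ p := by
      rw [div_mul_eq_mul_div, div_le_iff₀ ha] at h1
      nlinarith [h1]
    have h3 : Phinv s * (s ^ p)⁻¹ * r ^ p = (Phinv s * r ^ p) / s ^ p := by ring
    rw [h3, le_div_iff₀ hb0]
    nlinarith [h2]
  have hre : (0:ℝ) < r ^ e := Real.rpow_pos_of_pos hr0 e
  rw [Real.norm_eq_abs, abs_of_nonneg (mul_nonneg (hnn r hr0.le) hre.le)]
  calc Phinv r * r ^ e ≤ (Phinv s * (s ^ p)⁻¹ * r ^ p) * r ^ e :=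
        mul_le_mul_of_nonneg_right hkey hre.le
  _ = Phinv s * (s ^ p)⁻¹ * r ^ (p + e) := by
        rw [Real.rpow_add hr0]; ring
end S6
section S7
variable {ℓ m N : ℝ} {Phinv : ℝ → ℝ}

lemma sobG_zero : sobG Phinv N 0 = 0 := intervalIntegral.integral_same

lemma sobG_strictMono (hm : 0 < m) (hmN : m < N)
    (hmono : MonotoneOn Phinv (Set.Ici (0:ℝ))) (hnn : ∀ r : ℝ, 0 ≤ r → 0 ≤ Phinv r)
    (hpos : ∀ r : ℝ, 0 < r → 0 < Phinv r)
    (hinvscale : ∀ s lam : ℝ, 0 ≤ s → 1 ≤ lam →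
      lam ^ (1/m) * Phinv s ≤ Phinv (lam * s) ∧ Phinv (lam * s) ≤ lam ^ (1/ℓ) * Phinv s) :
    StrictMonoOn (sobG Phinv N) (Set.Ici (0:ℝ)) := by
  intro a ha b hb hab
  have hb0 : 0 < b := lt_of_le_of_lt ha hab
  have hint_b := g_intInt (ℓ := ℓ) hm hmN hmono hnn hinvscale hb0
  have hint_ab : IntervalIntegrable (fun r => Phinv r * r ^ (-(N + 1) / N)) volume a b := by
    apply hint_b.mono_set
    rw [Set.uIcc_of_le hab.le, Set.uIcc_of_le hb0.le]
    exact Set.Icc_subset_Icc ha le_rfl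
  have hint_0a : IntervalIntegrable (fun r => Phinv r * r ^ (-(N + 1) / N)) volume 0 a := by
    apply hint_b.mono_set
    rw [Set.uIcc_of_le ha, Set.uIcc_of_le hb0.le]
    exact Set.Icc_subset_Icc le_rfl hab.le
  have hsplit : sobG Phinv N a + (∫ r in a..b, Phinv r * r ^ (-(N + 1) / N)) = sobG Phinv N b :=
    intervalIntegral.integral_add_adjacent_intervals hint_0a hint_ab
  have hposint : 0 < ∫ r in a..b, Phinv r * r ^ (-(N + 1) / N) := by
    apply intervalIntegral.intervalIntegral_pos_of_pos_on hint_ab _ hab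
    intro x hx
    have hx0 : 0 < x := lt_of_le_of_lt ha hx.1
    exact mul_pos (hpos x hx0) (Real.rpow_pos_of_pos hx0 _)
  linarith

lemma sobG_nonneg (hnn : ∀ r : ℝ, 0 ≤ r → 0 ≤ Phinv r) {s : ℝ} (hs : 0 ≤ s) :
    0 ≤ sobG Phinv N s := by
  apply intervalIntegral.integral_nonneg hs
  intro r hr
  exact mul_nonneg (hnn r hr.1) (Real.rpow_nonneg hr.1 _)

lemma sobG_scale (hm : 0 < m) (hℓ0 : 0 < ℓ) (hmN : m < N)
    (hmono : MonotoneOn Phinv (Set.Ici (0:ℝ))) (hnn : ∀ r : ℝ, 0 ≤ r → 0 ≤ Phinv r)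
    (hinv0 : Phinv 0 = 0)
    (hinvscale : ∀ s lam : ℝ, 0 ≤ s → 1 ≤ lam →
      lam ^ (1/m) * Phinv s ≤ Phinv (lam * s) ∧ Phinv (lam * s) ≤ lam ^ (1/ℓ) * Phinv s)
    {s lam : ℝ} (hs : 0 ≤ s) (hlam : 1 ≤ lam) :
    lam ^ (1/m - 1/N) * sobG Phinv N s ≤ sobG Phinv N (lam * s) ∧
    sobG Phinv N (lam * s) ≤ lam ^ (1/ℓ - 1/N) * sobG Phinv N s := by
  have hN0 : 0 < N := lt_trans hm hmN
  have hlam0 : (0:ℝ) < lam := lt_of_lt_of_le one_pos hlam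
  rcases eq_or_lt_of_le hs with h | hs0
  · rw [← h, mul_zero, sobG_zero, mul_zero]
    constructor <;> simp
  set e := -(N + 1) / N with he
  -- substitution
  have hsub : sobG Phinv N (lam * s) = lam * ∫ x in (0:ℝ)..s, Phinv (lam * x) * (lam * x) ^ e := by
    have hcl := intervalIntegral.integral_comp_mul_left (a := (0:ℝ)) (b := s)
      (fun x => Phinv x * x ^ e) (ne_of_gt hlam0)
    rw [mul_zero, smul_eq_mul] at hcl
    rw [hcl, sobG, ← mul_assoc, mul_inv_cancel₀ (ne_of_gt hlam0), one_mul]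
  have hint_ls := g_intInt (ℓ := ℓ) hm hmN hmono hnn hinvscale (mul_pos hlam0 hs0)
  have hint_comp : IntervalIntegrable (fun x => Phinv (lam * x) * (lam * x) ^ e) volume 0 s := by
    have := hint_ls.comp_mul_left (c := lam)
    rw [zero_div, mul_div_cancel_left₀ _ (ne_of_gt hlam0)] at this
    exact this
  have hint_s := g_intInt (ℓ := ℓ) hm hmN hmono hnn hinvscale hs0
  have hepos : ∀ x : ℝ, 0 < x → (0:ℝ) < x ^ e := fun x hx => Real.rpow_pos_of_pos hx e
  constructor
  · -- lower bound
    have hptwise : ∀ x ∈ Set.Icc (0:ℝ) s,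
        lam ^ (1/m + e) * (Phinv x * x ^ e) ≤ Phinv (lam * x) * (lam * x) ^ e := by
      intro x hx
      rcases eq_or_lt_of_le hx.1 with h | hx0
      · rw [← h]; simp [hinv0]
      · have h1 := (hinvscale x lam hx.1 hlam).1
        have h2 : (lam * x) ^ e = lam ^ e * x ^ e := Real.mul_rpow hlam0.le hx.1
        rw [h2, Real.rpow_add hlam0]
        calc lam ^ (1/m) * lam ^ e * (Phinv x * x ^ e)
            = (lam ^ (1/m) * Phinv x) * (lam ^ e * x ^ e) := by ring
          _ ≤ Phinv (lam * x) * (lam ^ e * x ^ e) := by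
              apply mul_le_mul_of_nonneg_right h1
              exact mul_nonneg (Real.rpow_nonneg hlam0.le _) (Real.rpow_nonneg hx.1 _)
    have hmono_int := intervalIntegral.integral_mono_on hs (hint_s.const_mul (lam ^ (1/m + e)))
      hint_comp hptwise
    rw [intervalIntegral.integral_const_mul] at hmono_int
    have : lam ^ (1/m - 1/N) = lam * lam ^ (1/m + e) := by
      calc lam ^ (1/m - 1/N) = lam ^ (1 + (1/m + e)) := by
            congr 1
            rw [he]; field_simp; ring
      _ = lam ^ (1:ℝ) * lam ^ (1/m + e) := Real.rpow_add hlam0 1 _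
      _ = lam * lam ^ (1/m + e) := by rw [Real.rpow_one]
    rw [hsub, this]
    calc lam * lam ^ (1/m + e) * sobG Phinv N s
        = lam * (lam ^ (1/m + e) * sobG Phinv N s) := by ring
      _ ≤ lam * ∫ x in (0:ℝ)..s, Phinv (lam * x) * (lam * x) ^ e :=
          mul_le_mul_of_nonneg_left hmono_int hlam0.le
  · -- upper bound
    have hptwise : ∀ x ∈ Set.Icc (0:ℝ) s,
        Phinv (lam * x) * (lam * x) ^ e ≤ lam ^ (1/ℓ + e) * (Phinv x * x ^ e) := by
      intro x hx
      rcases eq_or_lt_of_le hx.1 with h | hx0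
      · rw [← h]; simp [hinv0]
      · have h1 := (hinvscale x lam hx.1 hlam).2
        have h2 : (lam * x) ^ e = lam ^ e * x ^ e := Real.mul_rpow hlam0.le hx.1
        rw [h2, Real.rpow_add hlam0]
        calc Phinv (lam * x) * (lam ^ e * x ^ e)
            ≤ (lam ^ (1/ℓ) * Phinv x) * (lam ^ e * x ^ e) := by
              apply mul_le_mul_of_nonneg_right h1
              exact mul_nonneg (Real.rpow_nonneg hlam0.le _) (Real.rpow_nonneg hx.1 _)
          _ = lam ^ (1/ℓ) * lam ^ e * (Phinv x * x ^ e) := by ring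
    have hmono_int := intervalIntegral.integral_mono_on hs hint_comp
      (hint_s.const_mul (lam ^ (1/ℓ + e))) hptwise
    rw [intervalIntegral.integral_const_mul] at hmono_int
    have heq : lam ^ (1/ℓ - 1/N) = lam * lam ^ (1/ℓ + e) := by
      calc lam ^ (1/ℓ - 1/N) = lam ^ (1 + (1/ℓ + e)) := by
            congr 1
            rw [he]; field_simp; ring
      _ = lam ^ (1:ℝ) * lam ^ (1/ℓ + e) := Real.rpow_add hlam0 1 _
      _ = lam * lam ^ (1/ℓ + e) := by rw [Real.rpow_one]
    rw [hsub, heq]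
    calc lam * ∫ x in (0:ℝ)..s, Phinv (lam * x) * (lam * x) ^ e
        ≤ lam * (lam ^ (1/ℓ + e) * sobG Phinv N s) :=
          mul_le_mul_of_nonneg_left hmono_int hlam0.le
      _ = lam * lam ^ (1/ℓ + e) * sobG Phinv N s := by ring
end S7

section S8
variable {ℓ m N lstar mstar : ℝ} {Phinv Phistar : ℝ → ℝ}

lemma Phistar_zero (hPhistar2 : ∀ t ∈ Set.Ici (0:ℝ), Phistar (sobG Phinv N t) = t) :
    Phistar 0 = 0 := by
  have := hPhistar2 0 (Set.mem_Ici.mpr le_rfl)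
  rwa [sobG_zero] at this

lemma Phistar_scale_up
    (hGSM : StrictMonoOn (sobG Phinv N) (Set.Ici (0:ℝ)))
    (hGscale : ∀ s lam : ℝ, 0 ≤ s → 1 ≤ lam →
      lam ^ (1/m - 1/N) * sobG Phinv N s ≤ sobG Phinv N (lam * s) ∧
      sobG Phinv N (lam * s) ≤ lam ^ (1/ℓ - 1/N) * sobG Phinv N s)
    (hPhistar : ∀ t ∈ Set.Ici (0:ℝ), 0 ≤ Phistar t ∧ sobG Phinv N (Phistar t) = t)
    (hℓ1 : 1 < ℓ) (hℓm : ℓ ≤ m) (hmN : m < N)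
    (hlstar : lstar = ℓ * N / (N - ℓ)) (hmstar : mstar = m * N / (N - m))
    {t lam : ℝ} (ht : 0 ≤ t) (hlam : 1 ≤ lam) :
    lam ^ lstar * Phistar t ≤ Phistar (lam * t) ∧
    Phistar (lam * t) ≤ lam ^ mstar * Phistar t := by
  have hℓ0 : 0 < ℓ := lt_trans one_pos hℓ1
  have hm0 : 0 < m := lt_of_lt_of_le hℓ0 hℓm
  have hN0 : 0 < N := lt_trans hm0 hmN
  have hNl : 0 < N - ℓ := by linarith
  have hNm : 0 < N - m := by linarith
  have hlam0 : (0:ℝ) < lam := lt_of_lt_of_le one_pos hlam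
  have hlstar0 : 0 < lstar := by rw [hlstar]; positivity
  have hmstar0 : 0 < mstar := by rw [hmstar]; positivity
  set s := Phistar t with hsdef
  have hs0 : 0 ≤ s := (hPhistar t (Set.mem_Ici.mpr ht)).1
  have hGs : sobG Phinv N s = t := (hPhistar t (Set.mem_Ici.mpr ht)).2
  have hlt : 0 ≤ lam * t := by positivity
  have hy0 : 0 ≤ Phistar (lam * t) := (hPhistar (lam * t) (Set.mem_Ici.mpr hlt)).1
  have hGy : sobG Phinv N (Phistar (lam * t)) = lam * t :=
    (hPhistar (lam * t) (Set.mem_Ici.mpr hlt)).2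
  have hrefl : ∀ a b : ℝ, 0 ≤ a → 0 ≤ b → sobG Phinv N a ≤ sobG Phinv N b → a ≤ b := by
    intro a b ha hb hab
    by_contra hcon
    push_neg at hcon
    exact absurd (hGSM (Set.mem_Ici.mpr hb) (Set.mem_Ici.mpr ha) hcon) (not_lt.mpr hab)
  constructor
  · have ha1 : 1 ≤ lam ^ lstar := Real.one_le_rpow hlam hlstar0.le
    have h1 := (hGscale s (lam ^ lstar) hs0 ha1).2
    have h2 : (lam ^ lstar) ^ (1/ℓ - 1/N) = lam := by
      rw [← Real.rpow_mul hlam0.le]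
      rw [show lstar * (1/ℓ - 1/N) = 1 by rw [hlstar]; field_simp]
      exact Real.rpow_one lam
    rw [h2, hGs] at h1
    apply hrefl _ _ (by positivity) hy0
    rw [hGy]
    exact h1
  · have ha1 : 1 ≤ lam ^ mstar := Real.one_le_rpow hlam hmstar0.le
    have h1 := (hGscale s (lam ^ mstar) hs0 ha1).1
    have h2 : (lam ^ mstar) ^ (1/m - 1/N) = lam := by
      rw [← Real.rpow_mul hlam0.le]
      rw [show mstar * (1/m - 1/N) = 1 by rw [hmstar]; field_simp]
      exact Real.rpow_one lam
    rw [h2, hGs] at h1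
    apply hrefl _ _ hy0 (by positivity)
    rw [hGy]
    exact h1

lemma Phistar_scale_down
    (hup : ∀ t lam : ℝ, 0 ≤ t → 1 ≤ lam →
      lam ^ lstar * Phistar t ≤ Phistar (lam * t) ∧
      Phistar (lam * t) ≤ lam ^ mstar * Phistar t)
    {t lam : ℝ} (ht : 0 ≤ t) (hlam0 : 0 < lam) (hlam : lam ≤ 1) :
    lam ^ mstar * Phistar t ≤ Phistar (lam * t) ∧
    Phistar (lam * t) ≤ lam ^ lstar * Phistar t := by
  have hinv1 : 1 ≤ lam⁻¹ := one_le_inv_iff₀.mpr ⟨hlam0, hlam⟩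
  have hlt : 0 ≤ lam * t := by positivity
  have h := hup (lam * t) lam⁻¹ hlt hinv1
  rw [inv_mul_cancel_left₀ (ne_of_gt hlam0)] at h
  have hil : (lam⁻¹) ^ lstar = (lam ^ lstar)⁻¹ := Real.inv_rpow hlam0.le lstar
  have him : (lam⁻¹) ^ mstar = (lam ^ mstar)⁻¹ := Real.inv_rpow hlam0.le mstar
  rw [hil, him] at h
  have hpl : (0:ℝ) < lam ^ lstar := Real.rpow_pos_of_pos hlam0 _
  have hpm : (0:ℝ) < lam ^ mstar := Real.rpow_pos_of_pos hlam0 _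
  constructor
  · have h2 : lam ^ mstar * Phistar t ≤ lam ^ mstar * ((lam ^ mstar)⁻¹ * Phistar (lam * t)) :=
      mul_le_mul_of_nonneg_left h.2 hpm.le
    rwa [← mul_assoc, mul_inv_cancel₀ (ne_of_gt hpm), one_mul] at h2
  · have := h.1
    have h2 : lam ^ lstar * ((lam ^ lstar)⁻¹ * Phistar (lam * t)) ≤ lam ^ lstar * Phistar t :=
      mul_le_mul_of_nonneg_left h.1 hpl.le
    rwa [← mul_assoc, mul_inv_cancel₀ (ne_of_gt hpl), one_mul] at h2
end S8

lemma luxNorm_endgame {lstar mstar : ℝ} {Phistar : ℝ → ℝ}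
    (hstmono : MonotoneOn Phistar (Set.Ici 0))
    (hstnn : ∀ t : ℝ, 0 ≤ t → 0 ≤ Phistar t)
    (hup : ∀ t lam : ℝ, 0 ≤ t → 1 ≤ lam →
      lam ^ lstar * Phistar t ≤ Phistar (lam * t) ∧ Phistar (lam * t) ≤ lam ^ mstar * Phistar t)
    (hdown : ∀ t lam : ℝ, 0 ≤ t → 0 < lam → lam ≤ 1 →
      lam ^ mstar * Phistar t ≤ Phistar (lam * t) ∧ Phistar (lam * t) ≤ lam ^ lstar * Phistar t)
    (hls0 : 0 < lstar) (hlsms : lstar ≤ mstar)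
    {Ω : Type*} [MeasurableSpace Ω] (μ : Measure Ω) (u : Ω → ℝ)
    (hu_meas : Measurable u)
    (hu_int : Integrable (fun x => Phistar (|u x|)) μ)
    (hu_pos : 0 < ∫ x, Phistar (|u x|) ∂μ) :
    min (luxNorm μ Phistar u ^ lstar) (luxNorm μ Phistar u ^ mstar) ≤ (∫ x, Phistar (|u x|) ∂μ) ∧
    (∫ x, Phistar (|u x|) ∂μ) ≤ max (luxNorm μ Phistar u ^ lstar) (luxNorm μ Phistar u ^ mstar)
    := by
  have hms0 : 0 < mstar := lt_of_lt_of_le hls0 hlsms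
  set I := ∫ x, Phistar (|u x|) ∂μ with hI
  -- measurability
  have hψ : Monotone (fun r : ℝ => Phistar (max r 0)) := fun a b hab =>
    hstmono (Set.mem_Ici.mpr (le_max_right a 0)) (Set.mem_Ici.mpr (le_max_right b 0))
      (max_le_max hab le_rfl)
  have hmeasured : ∀ lam : ℝ, 0 < lam →
      AEStronglyMeasurable (fun x => Phistar (|u x| / lam)) μ := by
    intro lam hlam
    have heq : (fun x => Phistar (|u x| / lam))
        = (fun x => Phistar (max (|u x| / lam) 0)) := by
      funext x; rw [max_eq_left (by positivity)]
    rw [heq]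
    exact ((hψ.measurable).comp ((hu_meas.abs).div_const lam)).aestronglyMeasurable
  -- upper pointwise bound
  have hBu : ∀ lam : ℝ, 0 < lam → ∀ t : ℝ, 0 ≤ t →
      Phistar (t / lam) ≤ max (lam⁻¹ ^ lstar) (lam⁻¹ ^ mstar) * Phistar t := by
    intro lam hlam t ht
    rw [div_eq_inv_mul]
    rcases le_total 1 lam with h | h
    · have hinv1 : lam⁻¹ ≤ 1 := by
        rw [inv_le_one_iff₀]; right; exact h
      have h2 := (hdown t lam⁻¹ ht (by positivity) hinv1).2
      calc Phistar (lam⁻¹ * t) ≤ lam⁻¹ ^ lstar * Phistar t := h2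
      _ ≤ max (lam⁻¹ ^ lstar) (lam⁻¹ ^ mstar) * Phistar t :=
          mul_le_mul_of_nonneg_right (le_max_left _ _) (hstnn t ht)
    · have hinv1 : 1 ≤ lam⁻¹ := one_le_inv_iff₀.mpr ⟨hlam, h⟩
      have h2 := (hup t lam⁻¹ ht hinv1).2
      calc Phistar (lam⁻¹ * t) ≤ lam⁻¹ ^ mstar * Phistar t := h2
      _ ≤ max (lam⁻¹ ^ lstar) (lam⁻¹ ^ mstar) * Phistar t :=
          mul_le_mul_of_nonneg_right (le_max_right _ _) (hstnn t ht)
  -- lower pointwise bound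
  have hBl : ∀ lam : ℝ, 0 < lam → ∀ t : ℝ, 0 ≤ t →
      min (lam⁻¹ ^ lstar) (lam⁻¹ ^ mstar) * Phistar t ≤ Phistar (t / lam) := by
    intro lam hlam t ht
    rw [div_eq_inv_mul]
    rcases le_total 1 lam with h | h
    · have hinv1 : lam⁻¹ ≤ 1 := by
        rw [inv_le_one_iff₀]; right; exact h
      have h2 := (hdown t lam⁻¹ ht (by positivity) hinv1).1
      calc min (lam⁻¹ ^ lstar) (lam⁻¹ ^ mstar) * Phistar t
          ≤ lam⁻¹ ^ mstar * Phistar t :=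
          mul_le_mul_of_nonneg_right (min_le_right _ _) (hstnn t ht)
      _ ≤ Phistar (lam⁻¹ * t) := h2
    · have hinv1 : 1 ≤ lam⁻¹ := one_le_inv_iff₀.mpr ⟨hlam, h⟩
      have h2 := (hup t lam⁻¹ ht hinv1).1
      calc min (lam⁻¹ ^ lstar) (lam⁻¹ ^ mstar) * Phistar t
          ≤ lam⁻¹ ^ lstar * Phistar t :=
          mul_le_mul_of_nonneg_right (min_le_left _ _) (hstnn t ht)
      _ ≤ Phistar (lam⁻¹ * t) := h2
  -- integrability
  have hIint : ∀ lam : ℝ, 0 < lam → Integrable (fun x => Phistar (|u x| / lam)) μ := by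
    intro lam hlam
    apply Integrable.mono' (hu_int.const_mul (max (lam⁻¹ ^ lstar) (lam⁻¹ ^ mstar)))
      (hmeasured lam hlam)
    filter_upwards with x
    rw [Real.norm_eq_abs, abs_of_nonneg (hstnn _ (by positivity))]
    exact hBu lam hlam (|u x|) (abs_nonneg _)
  -- comparison
  have hcmp : ∀ a b : ℝ, 0 < b → b ≤ a →
      (∫ x, Phistar (|u x| / b) ∂μ) ≤ (a / b) ^ mstar * ∫ x, Phistar (|u x| / a) ∂μ := by
    intro a b hb hba
    have ha : 0 < a := lt_of_lt_of_le hb hba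
    have h1 : ∀ x, Phistar (|u x| / b) ≤ (a/b) ^ mstar * Phistar (|u x| / a) := by
      intro x
      have hq : (a / b) * (|u x| / a) = |u x| / b := by
        field_simp
      have h2 := (hup (|u x| / a) (a/b) (by positivity) ((one_le_div hb).mpr hba)).2
      rw [hq] at h2
      exact h2
    calc (∫ x, Phistar (|u x| / b) ∂μ) ≤ ∫ x, (a/b)^mstar * Phistar (|u x| / a) ∂μ :=
        integral_mono (hIint b hb) ((hIint a ha).const_mul _) h1
    _ = (a/b)^mstar * ∫ x, Phistar (|u x| / a) ∂μ := MeasureTheory.integral_const_mul _ _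
  -- the set S
  set S := {lam : ℝ | 0 < lam ∧ (∫ x, Phistar (|u x| / lam) ∂μ) ≤ 1} with hSdef
  have hINN : 0 ≤ I := hu_pos.le
  -- S nonempty
  have hNe : S.Nonempty := by
    refine ⟨max 1 (I ^ (1/lstar)), lt_of_lt_of_le one_pos (le_max_left _ _), ?_⟩
    set lam := max 1 (I ^ (1/lstar)) with hlamdef
    have hlam1 : 1 ≤ lam := le_max_left _ _
    have hlam0 : 0 < lam := lt_of_lt_of_le one_pos hlam1
    have hinv1 : lam⁻¹ ≤ 1 := by rw [inv_le_one_iff₀]; right; exact hlam1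
    have hpt : ∀ x, Phistar (|u x| / lam) ≤ lam⁻¹ ^ lstar * Phistar (|u x|) := by
      intro x
      have h2 := (hdown (|u x|) lam⁻¹ (abs_nonneg _) (by positivity) hinv1).2
      rw [← div_eq_inv_mul] at h2
      exact h2
    have hle : (∫ x, Phistar (|u x| / lam) ∂μ) ≤ lam⁻¹ ^ lstar * I := by
      calc (∫ x, Phistar (|u x| / lam) ∂μ) ≤ ∫ x, lam⁻¹ ^ lstar * Phistar (|u x|) ∂μ :=
          integral_mono (hIint lam hlam0) (hu_int.const_mul _) hpt
      _ = lam⁻¹ ^ lstar * I := MeasureTheory.integral_const_mul _ _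
    have hIle : I ≤ lam ^ lstar := by
      have h1 : I ^ (1/lstar) ≤ lam := le_max_right _ _
      calc I = (I ^ (1/lstar)) ^ lstar := by
            rw [← Real.rpow_mul hINN, one_div, inv_mul_cancel₀ (ne_of_gt hls0), Real.rpow_one]
      _ ≤ lam ^ lstar := Real.rpow_le_rpow (Real.rpow_nonneg hINN _) h1 hls0.le
    calc (∫ x, Phistar (|u x| / lam) ∂μ) ≤ lam⁻¹ ^ lstar * I := hle
    _ ≤ lam⁻¹ ^ lstar * lam ^ lstar := by
        apply mul_le_mul_of_nonneg_left hIle (Real.rpow_nonneg (by positivity) _)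
    _ = 1 := by
        rw [← Real.mul_rpow (by positivity) (by positivity), inv_mul_cancel₀ (ne_of_gt hlam0),
          Real.one_rpow]
  -- S bounded below
  set lb := min 1 (I ^ (1/lstar)) with hlbdef
  have hlb0 : 0 < lb := lt_min one_pos (Real.rpow_pos_of_pos hu_pos _)
  have hlbS : ∀ lam ∈ S, lb ≤ lam := by
    intro lam hlam
    obtain ⟨hlam0, hlamle⟩ := hlam
    rcases le_total 1 lam with h | h
    · exact le_trans (min_le_left _ _) h
    · have hinv1 : 1 ≤ lam⁻¹ := one_le_inv_iff₀.mpr ⟨hlam0, h⟩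
      have hpt : ∀ x, lam⁻¹ ^ lstar * Phistar (|u x|) ≤ Phistar (|u x| / lam) := by
        intro x
        have h2 := (hup (|u x|) lam⁻¹ (abs_nonneg _) hinv1).1
        rw [← div_eq_inv_mul] at h2
        exact h2
      have hge : lam⁻¹ ^ lstar * I ≤ ∫ x, Phistar (|u x| / lam) ∂μ := by
        calc lam⁻¹ ^ lstar * I = ∫ x, lam⁻¹ ^ lstar * Phistar (|u x|) ∂μ :=
            (MeasureTheory.integral_const_mul _ _).symm
        _ ≤ ∫ x, Phistar (|u x| / lam) ∂μ :=
            integral_mono (hu_int.const_mul _) (hIint lam hlam0) hpt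
      have h3 : lam⁻¹ ^ lstar * I ≤ 1 := le_trans hge hlamle
      have h4 : I ≤ lam ^ lstar := by
        have h5 : lam⁻¹ ^ lstar = (lam ^ lstar)⁻¹ := Real.inv_rpow hlam0.le _
        rw [h5] at h3
        have hpl : (0:ℝ) < lam ^ lstar := Real.rpow_pos_of_pos hlam0 _
        calc I = lam ^ lstar * ((lam ^ lstar)⁻¹ * I) := by field_simp
        _ ≤ lam ^ lstar * 1 := mul_le_mul_of_nonneg_left h3 hpl.le
        _ = lam ^ lstar := mul_one _
      have h6 : I ^ (1/lstar) ≤ lam := by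
        calc I ^ (1/lstar) ≤ (lam ^ lstar) ^ (1/lstar) :=
            Real.rpow_le_rpow hINN h4 (by positivity)
        _ = lam := by
            rw [← Real.rpow_mul hlam0.le, one_div, mul_inv_cancel₀ (ne_of_gt hls0),
              Real.rpow_one]
      exact le_trans (min_le_right _ _) h6
  have hbdd : BddBelow S := ⟨lb, hlbS⟩
  set k := sInf S with hkdef
  have hk_lb : lb ≤ k := le_csInf hNe hlbS
  have hk_pos : 0 < k := lt_of_lt_of_le hlb0 hk_lb
  set ρk := ∫ x, Phistar (|u x| / k) ∂μ with hρkdef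
  -- ρk positive
  have hρk_pos : 0 < ρk := by
    have hpt : ∀ x, min (k⁻¹ ^ lstar) (k⁻¹ ^ mstar) * Phistar (|u x|) ≤ Phistar (|u x| / k) :=
      fun x => hBl k hk_pos (|u x|) (abs_nonneg _)
    have hge : min (k⁻¹ ^ lstar) (k⁻¹ ^ mstar) * I ≤ ρk := by
      calc min (k⁻¹ ^ lstar) (k⁻¹ ^ mstar) * I
          = ∫ x, min (k⁻¹ ^ lstar) (k⁻¹ ^ mstar) * Phistar (|u x|) ∂μ :=
          (MeasureTheory.integral_const_mul _ _).symm
      _ ≤ ρk := integral_mono (hu_int.const_mul _) (hIint k hk_pos) hpt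
    have hminpos : 0 < min (k⁻¹ ^ lstar) (k⁻¹ ^ mstar) :=
      lt_min (Real.rpow_pos_of_pos (by positivity) _) (Real.rpow_pos_of_pos (by positivity) _)
    nlinarith
  -- ρk ≤ 1
  have hρk_le : ρk ≤ 1 := by
    have hall : ∀ c : ℝ, 1 < c → ρk ≤ c ^ mstar := by
      intro c hc
      have hck : k < c * k := by nlinarith
      obtain ⟨lam, hlamS, hlamlt⟩ := exists_lt_of_csInf_lt hNe (show sInf S < c * k from hck)
      have hklam : k ≤ lam := csInf_le hbdd hlamS
      have h1 := hcmp lam k hk_pos hklam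
      have h2 : (lam / k) ^ mstar ≤ c ^ mstar := by
        apply Real.rpow_le_rpow (div_nonneg (le_trans hk_pos.le hklam) hk_pos.le) _ hms0.le
        rw [div_le_iff₀ hk_pos]
        exact hlamlt.le
      calc ρk ≤ (lam/k)^mstar * ∫ x, Phistar (|u x| / lam) ∂μ := h1
      _ ≤ (lam/k)^mstar * 1 :=
          mul_le_mul_of_nonneg_left hlamS.2
            (Real.rpow_nonneg (div_nonneg (le_trans hk_pos.le hklam) hk_pos.le) _)
      _ = (lam/k)^mstar := mul_one _
      _ ≤ c ^ mstar := h2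
    by_contra hcon
    push_neg at hcon
    set a := ρk ^ ((1:ℝ)/2) with hadef
    have ha1 : 1 < a := Real.one_lt_rpow_iff_of_pos (by linarith) |>.mpr (Or.inl ⟨hcon, by norm_num⟩)
    set c := ρk ^ (1/(2*mstar)) with hcdef
    have hc1 : 1 < c := Real.one_lt_rpow_iff_of_pos (by linarith) |>.mpr
      (Or.inl ⟨hcon, by positivity⟩)
    have hcm : c ^ mstar = a := by
      rw [hcdef, hadef, ← Real.rpow_mul (by linarith : (0:ℝ) ≤ ρk)]
      congr 1
      field_simp
    have h2 := hall c hc1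
    rw [hcm] at h2
    have haa : a * a = ρk := by
      rw [hadef, ← Real.rpow_add (by linarith : (0:ℝ) < ρk)]
      norm_num
    nlinarith
  -- 1 ≤ ρk
  have hρk_ge : 1 ≤ ρk := by
    by_contra hcon
    push_neg at hcon
    set d := ρk⁻¹ with hddef
    have hd1 : 1 < d := by
      rw [hddef]
      exact one_lt_inv_iff₀.mpr ⟨hρk_pos, hcon⟩
    set c := d ^ (1/mstar) with hcdef
    have hc1 : 1 < c := Real.one_lt_rpow_iff_of_pos (by linarith) |>.mpr (Or.inl ⟨hd1, by positivity⟩)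
    have hc0 : 0 < c := lt_trans one_pos hc1
    have hcm : c ^ mstar = d := by
      rw [hcdef, ← Real.rpow_mul (by linarith : (0:ℝ) ≤ d), one_div,
        inv_mul_cancel₀ (ne_of_gt hms0), Real.rpow_one]
    set lam := k / c with hlamdef
    have hlam0 : 0 < lam := by positivity
    have hlamk : lam < k := by
      rw [hlamdef, div_lt_iff₀ hc0]
      nlinarith
    have hkl : k / lam = c := by
      rw [hlamdef]
      field_simp
    have hmem : lam ∈ S := by
      refine ⟨hlam0, ?_⟩
      have h1 := hcmp k lam hlam0 hlamk.le
      rw [hkl, hcm] at h1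
      calc (∫ x, Phistar (|u x| / lam) ∂μ) ≤ d * ρk := h1
      _ = 1 := by rw [hddef, inv_mul_cancel₀ (ne_of_gt hρk_pos)]
    have := csInf_le hbdd hmem
    rw [← hkdef] at this
    linarith
  have hρk1 : ρk = 1 := le_antisymm hρk_le hρk_ge
  -- luxNorm = k
  have hlux : luxNorm μ Phistar u = k := rfl
  rw [hlux]
  -- final bounds
  have hkne : k ≠ 0 := ne_of_gt hk_pos
  rcases le_total 1 k with hk1 | hk1
  · -- k ≥ 1
    have hptL : ∀ x, k ^ lstar * Phistar (|u x| / k) ≤ Phistar (|u x|) := by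
      intro x
      have h := (hup (|u x| / k) k (by positivity) hk1).1
      rwa [mul_div_cancel₀ _ hkne] at h
    have hptU : ∀ x, Phistar (|u x|) ≤ k ^ mstar * Phistar (|u x| / k) := by
      intro x
      have h := (hup (|u x| / k) k (by positivity) hk1).2
      rwa [mul_div_cancel₀ _ hkne] at h
    have hL : k ^ lstar * ρk ≤ I := by
      calc k ^ lstar * ρk = ∫ x, k ^ lstar * Phistar (|u x| / k) ∂μ :=
          (MeasureTheory.integral_const_mul _ _).symm
      _ ≤ I := integral_mono ((hIint k hk_pos).const_mul _) hu_int hptL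
    have hU : I ≤ k ^ mstar * ρk := by
      calc I ≤ ∫ x, k ^ mstar * Phistar (|u x| / k) ∂μ :=
          integral_mono hu_int ((hIint k hk_pos).const_mul _) hptU
      _ = k ^ mstar * ρk := MeasureTheory.integral_const_mul _ _
    rw [hρk1, mul_one] at hL hU
    have hminmax : k ^ lstar ≤ k ^ mstar := Real.rpow_le_rpow_of_exponent_le hk1 hlsms
    rw [min_eq_left hminmax, max_eq_right hminmax]
    exact ⟨hL, hU⟩
  · -- k ≤ 1
    have hptL : ∀ x, k ^ mstar * Phistar (|u x| / k) ≤ Phistar (|u x|) := by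
      intro x
      have h := (hdown (|u x| / k) k (by positivity) hk_pos hk1).1
      rwa [mul_div_cancel₀ _ hkne] at h
    have hptU : ∀ x, Phistar (|u x|) ≤ k ^ lstar * Phistar (|u x| / k) := by
      intro x
      have h := (hdown (|u x| / k) k (by positivity) hk_pos hk1).2
      rwa [mul_div_cancel₀ _ hkne] at h
    have hL : k ^ mstar * ρk ≤ I := by
      calc k ^ mstar * ρk = ∫ x, k ^ mstar * Phistar (|u x| / k) ∂μ :=
          (MeasureTheory.integral_const_mul _ _).symm
      _ ≤ I := integral_mono ((hIint k hk_pos).const_mul _) hu_int hptL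
    have hU : I ≤ k ^ lstar * ρk := by
      calc I ≤ ∫ x, k ^ lstar * Phistar (|u x| / k) ∂μ :=
          integral_mono hu_int ((hIint k hk_pos).const_mul _) hptU
      _ = k ^ lstar * ρk := MeasureTheory.integral_const_mul _ _
    rw [hρk1, mul_one] at hL hU
    have hminmax : k ^ mstar ≤ k ^ lstar :=
      Real.rpow_le_rpow_of_exponent_ge hk_pos hk1 hlsms
    rw [min_eq_right hminmax, max_eq_left hminmax]
    exact ⟨hL, hU⟩

end Lemmas

/-- with the Luxemburg norm `‖·‖_{Φ*}`, one has
`min{‖u‖_{Φ*}^{ℓ*}, ‖u‖_{Φ*}^{m*}} ≤ ∫_Ω Φ*(|u|) dμ ≤ max{‖u‖_{Φ*}^{ℓ*}, ‖u‖_{Φ*}^{m*}}`. -/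
theorem stmt_16 (φ : ℝ → ℝ) (ℓ m : ℝ)
    (hφ_pos : ∀ t > 0, 0 < φ t)
    (hφ_C2 : ContDiffOn ℝ 2 φ (Set.Ioi 0))
    (hℓ : 1 < ℓ) (hℓm : ℓ ≤ m)
    (hφ1₀ : Tendsto (fun t => t * φ t) (nhdsWithin 0 (Set.Ioi 0)) (nhds 0))
    (hφ1top : Tendsto (fun t => t * φ t) atTop atTop)
    (hφ2 : StrictMonoOn (fun t => t * φ t) (Set.Ioi 0))
    (hφ3 : ∀ t > 0,
      (ℓ - 2) * deriv (fun s => s * φ s) t ≤ t * deriv (deriv (fun s => s * φ s)) t ∧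
      t * deriv (deriv (fun s => s * φ s)) t ≤ (m - 2) * deriv (fun s => s * φ s) t)
    (N : ℝ) (hN : m < N)
    (Phinv : ℝ → ℝ)
    (hPhinv : ∀ s ∈ Set.Ici (0:ℝ), 0 ≤ Phinv s ∧ Phi φ (Phinv s) = s)
    (hPhinv2 : ∀ t ∈ Set.Ici (0:ℝ), Phinv (Phi φ t) = t)
    (Phistar : ℝ → ℝ)
    (hPhistar : ∀ t ∈ Set.Ici (0:ℝ), 0 ≤ Phistar t ∧ sobG Phinv N (Phistar t) = t)
    (hPhistar2 : ∀ t ∈ Set.Ici (0:ℝ), Phistar (sobG Phinv N t) = t)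
    (lstar mstar : ℝ) (hlstar : lstar = ℓ * N / (N - ℓ)) (hmstar : mstar = m * N / (N - m))
    {Ω : Type*} [MeasurableSpace Ω] (μ : Measure Ω) (u : Ω → ℝ)
    (hu_meas : Measurable u)
    (hu_int : Integrable (fun x => Phistar (|u x|)) μ)
    (hu_pos : 0 < ∫ x, Phistar (|u x|) ∂μ) :
    min (luxNorm μ Phistar u ^ lstar) (luxNorm μ Phistar u ^ mstar) ≤
        (∫ x, Phistar (|u x|) ∂μ) ∧
    (∫ x, Phistar (|u x|) ∂μ) ≤
        max (luxNorm μ Phistar u ^ lstar) (luxNorm μ Phistar u ^ mstar) := by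
  have hℓ0 : 0 < ℓ := lt_trans one_pos hℓ
  have hm0 : 0 < m := lt_of_lt_of_le hℓ0 hℓm
  have hN0 : 0 < N := lt_trans hm0 hN
  have hNl : 0 < N - ℓ := by linarith
  have hNm : 0 < N - m := by linarith
  have hkm : ∀ t : ℝ, 0 < t → t * deriv (fun s => s * φ s) t ≤ (m - 1) * (t * φ t) :=
    fun t ht => key_m hφ_pos hφ_C2 hℓ hℓm hφ3 ht
  have hkl : ∀ t : ℝ, 0 < t → (ℓ - 1) * (t * φ t) ≤ t * deriv (fun s => s * φ s) t :=
    fun t ht => key_l hφ_pos hφ_C2 hℓ hφ1₀ hφ2 hφ3 ht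
  have hk2m : ∀ t : ℝ, 0 < t → t * (t * φ t) ≤ m * Phi φ t :=
    fun t ht => key2_m hφ_pos hφ_C2 hℓ hℓm hφ1₀ hφ2 hkm ht
  have hk2l : ∀ t : ℝ, 0 < t → ℓ * Phi φ t ≤ t * (t * φ t) :=
    fun t ht => key2_l hφ_pos hφ_C2 hℓ hφ2 hkl ht
  have hPhiSM : StrictMonoOn (Phi φ) (Set.Ici (0:ℝ)) := Phi_strictMono hφ_pos hφ_C2 hφ2
  have hscale : ∀ t lam : ℝ, 0 < t → 1 ≤ lam →
      lam ^ ℓ * Phi φ t ≤ Phi φ (lam * t) ∧ Phi φ (lam * t) ≤ lam ^ m * Phi φ t :=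
    fun t lam ht hlam => Phi_scale hφ_pos hφ_C2 hℓ hℓm hφ2 hk2m hk2l ht hlam
  obtain ⟨hinv0, hinvpos, hinvscale⟩ :=
    Phinv_facts hPhiSM hscale hℓ0 hm0 hPhinv hPhinv2
  have hinvmono : MonotoneOn Phinv (Set.Ici (0:ℝ)) := inv_monoOn hPhiSM hPhinv
  have hinvnn : ∀ r : ℝ, 0 ≤ r → 0 ≤ Phinv r := fun r hr => (hPhinv r hr).1
  have hGSM : StrictMonoOn (sobG Phinv N) (Set.Ici (0:ℝ)) :=
    sobG_strictMono (ℓ := ℓ) hm0 hN hinvmono hinvnn hinvpos hinvscale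
  have hGscale : ∀ s lam : ℝ, 0 ≤ s → 1 ≤ lam →
      lam ^ (1/m - 1/N) * sobG Phinv N s ≤ sobG Phinv N (lam * s) ∧
      sobG Phinv N (lam * s) ≤ lam ^ (1/ℓ - 1/N) * sobG Phinv N s :=
    fun s lam hs hlam => sobG_scale hm0 hℓ0 hN hinvmono hinvnn hinv0 hinvscale hs hlam
  have hup : ∀ t lam : ℝ, 0 ≤ t → 1 ≤ lam →
      lam ^ lstar * Phistar t ≤ Phistar (lam * t) ∧
      Phistar (lam * t) ≤ lam ^ mstar * Phistar t :=
    fun t lam ht hlam =>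
      Phistar_scale_up hGSM hGscale hPhistar hℓ hℓm hN hlstar hmstar ht hlam
  have hdown : ∀ t lam : ℝ, 0 ≤ t → 0 < lam → lam ≤ 1 →
      lam ^ mstar * Phistar t ≤ Phistar (lam * t) ∧
      Phistar (lam * t) ≤ lam ^ lstar * Phistar t :=
    fun t lam ht h0 h1 => Phistar_scale_down hup ht h0 h1
  have hstmono : MonotoneOn Phistar (Set.Ici (0:ℝ)) := inv_monoOn hGSM hPhistar
  have hstnn : ∀ t : ℝ, 0 ≤ t → 0 ≤ Phistar t :=
    fun t ht => (hPhistar t (Set.mem_Ici.mpr ht)).1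
  have hls0 : 0 < lstar := by rw [hlstar]; positivity
  have hlsms : lstar ≤ mstar := by
    rw [hlstar, hmstar, div_le_div_iff₀ hNl hNm]
    nlinarith [mul_le_mul_of_nonneg_right hℓm (mul_pos hN0 hN0).le]
  exact luxNorm_endgame hstmono hstnn hup hdown hls0 hlsms μ u hu_meas hu_int hu_pos
end

section
/- For every real r with 1 ≤ r < ℓ* and every λ > 0, one has (λt)^r / Φ*(t) → 0 as t → ∞; that is, the N-function Ψ(t) = t^r/r grows essentially more slowly than the Sobolev conjugate Φ*. -/
open Filter Set MeasureTheory

set_option maxHeartbeats 1000000 in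
/-- for every `1 ≤ r < ℓ*` and `λ > 0`, `(λt)^r / Φ*(t) → 0` as `t → ∞`;
i.e. the N-function `Ψ(t) = t^r/r` grows essentially more slowly than the Sobolev
conjugate `Φ*`. -/
theorem stmt_17 (φ : ℝ → ℝ) (ℓ m : ℝ)
    (hφ_pos : ∀ t > 0, 0 < φ t)
    (hφ_C2 : ContDiffOn ℝ 2 φ (Set.Ioi 0))
    (hℓ : 1 < ℓ) (hℓm : ℓ ≤ m)
    (hφ1₀ : Tendsto (fun t => t * φ t) (nhdsWithin 0 (Set.Ioi 0)) (nhds 0))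
    (hφ1top : Tendsto (fun t => t * φ t) atTop atTop)
    (hφ2 : StrictMonoOn (fun t => t * φ t) (Set.Ioi 0))
    (hφ3 : ∀ t > 0,
      (ℓ - 2) * deriv (fun s => s * φ s) t ≤ t * deriv (deriv (fun s => s * φ s)) t ∧
      t * deriv (deriv (fun s => s * φ s)) t ≤ (m - 2) * deriv (fun s => s * φ s) t)
    (N : ℝ) (hN : m < N)
    (Phinv : ℝ → ℝ)
    (hPhinv : ∀ s ∈ Set.Ici (0:ℝ), 0 ≤ Phinv s ∧ Phi φ (Phinv s) = s)
    (hPhinv2 : ∀ t ∈ Set.Ici (0:ℝ), Phinv (Phi φ t) = t)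
    (Phistar : ℝ → ℝ)
    (hPhistar : ∀ t ∈ Set.Ici (0:ℝ), 0 ≤ Phistar t ∧ sobG Phinv N (Phistar t) = t)
    (hPhistar2 : ∀ t ∈ Set.Ici (0:ℝ), Phistar (sobG Phinv N t) = t)
    (lstar : ℝ) (hlstar : lstar = ℓ * N / (N - ℓ)) :
    ∀ r : ℝ, 1 ≤ r → r < lstar → ∀ lam : ℝ, 0 < lam →
      Tendsto (fun t => (lam * t) ^ r / Phistar t) atTop (nhds 0) := by
  intro r hr hrl lam hlam
  set H : ℝ → ℝ := fun s => s * φ s with hHdef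
  have hm : 1 < m := lt_of_lt_of_le hℓ hℓm
  have hm0 : 0 < m := by linarith
  have hℓ0 : 0 < ℓ := by linarith
  have hN0 : 0 < N := by linarith
  have hℓN : ℓ < N := by linarith
  -- differentiability facts
  have hH2 : ContDiffOn ℝ 2 H (Set.Ioi 0) := by
    exact (contDiffOn_id).mul hφ_C2
  have hHd : ∀ t ∈ Set.Ioi (0:ℝ), HasDerivAt H (deriv H t) t := by
    intro t ht
    exact ((hH2.differentiableOn (by norm_num)).differentiableAt
      (isOpen_Ioi.mem_nhds ht)).hasDerivAt
  have hH1 : ContDiffOn ℝ 1 (deriv H) (Set.Ioi 0) := by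
    exact hH2.deriv_of_isOpen isOpen_Ioi (by norm_num)
  have hHd2 : ∀ t ∈ Set.Ioi (0:ℝ), HasDerivAt (deriv H) (deriv (deriv H) t) t := by
    intro t ht
    exact ((hH1.differentiableOn (by norm_num)).differentiableAt
      (isOpen_Ioi.mem_nhds ht)).hasDerivAt
  -- nonnegativity of deriv H
  have hH1nn : ∀ t ∈ Set.Ioi (0:ℝ), 0 ≤ deriv H t := by
    intro t ht
    have hder := hHd t ht
    rw [hasDerivAt_iff_tendsto_slope] at hder
    apply ge_of_tendsto hder
    have hmem : Set.Ioi (0:ℝ) ∈ nhdsWithin t {t}ᶜ :=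
      nhdsWithin_le_nhds (isOpen_Ioi.mem_nhds ht)
    filter_upwards [hmem, self_mem_nhdsWithin] with x hx hx'
    have hxne : x ≠ t := hx'
    rw [slope_def_field]
    rcases lt_or_gt_of_ne hxne with hlt | hgt
    · rw [div_nonneg_iff]
      right
      constructor
      · have := hφ2.monotoneOn hx ht hlt.le
        simpa [sub_nonpos] using this
      · linarith
    · apply div_nonneg
      · have := hφ2.monotoneOn ht hx hgt.le
        simpa [sub_nonneg] using this
      · linarith
  -- the auxiliary monotone quantities
  have hEd : ∀ c : ℝ, ∀ t ∈ Set.Ioi (0:ℝ), HasDerivAt (fun t => deriv H t * t ^ (2 - c))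
      (deriv (deriv H) t * t ^ (2-c) + deriv H t * ((2-c) * t ^ (2-c-1))) t := by
    intro c t ht
    exact (hHd2 t ht).mul (Real.hasDerivAt_rpow_const (Or.inl (ne_of_gt ht)))
  have hpow_split : ∀ c : ℝ, ∀ x : ℝ, 0 < x → x ^ (2-c) = x * x ^ (2-c-1) := by
    intro c x hx
    have e : 1 + (2-c-1) = 2 - c := by ring
    conv_lhs => rw [← e]
    rw [Real.rpow_add hx, Real.rpow_one]
  have hE_anti : AntitoneOn (fun t => deriv H t * t ^ (2 - m)) (Set.Ioi 0) := by
    apply antitoneOn_of_deriv_nonpos (convex_Ioi 0)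
    · exact fun x hx => (hEd m x hx).continuousAt.continuousWithinAt
    · rw [interior_Ioi]
      exact fun x hx => (hEd m x hx).differentiableAt.differentiableWithinAt
    · rw [interior_Ioi]
      intro x hx
      rw [(hEd m x hx).deriv]
      have h3 := (hφ3 x hx).2
      have hp : (0:ℝ) ≤ x ^ (2-m-1) := Real.rpow_nonneg (le_of_lt hx) _
      rw [hpow_split m x hx]
      have hmul := mul_le_mul_of_nonneg_left h3 hp
      have he : deriv (deriv H) x * (x * x ^ (2-m-1)) + deriv H x * ((2-m) * x ^ (2-m-1))
          = x ^ (2-m-1) * (x * deriv (deriv H) x) - x ^ (2-m-1) * ((m-2) * deriv H x) := by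
        ring
      rw [he]
      linarith
  have hV_mono : MonotoneOn (fun t => deriv H t * t ^ (2 - ℓ)) (Set.Ioi 0) := by
    apply monotoneOn_of_deriv_nonneg (convex_Ioi 0)
    · exact fun x hx => (hEd ℓ x hx).continuousAt.continuousWithinAt
    · rw [interior_Ioi]
      exact fun x hx => (hEd ℓ x hx).differentiableAt.differentiableWithinAt
    · rw [interior_Ioi]
      intro x hx
      rw [(hEd ℓ x hx).deriv]
      have h3 := (hφ3 x hx).1
      have hp : (0:ℝ) ≤ x ^ (2-ℓ-1) := Real.rpow_nonneg (le_of_lt hx) _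
      rw [hpow_split ℓ x hx]
      have hmul := mul_le_mul_of_nonneg_left h3 hp
      have he : deriv (deriv H) x * (x * x ^ (2-ℓ-1)) + deriv H x * ((2-ℓ) * x ^ (2-ℓ-1))
          = x ^ (2-ℓ-1) * (x * deriv (deriv H) x) - x ^ (2-ℓ-1) * ((ℓ-2) * deriv H x) := by
        ring
      rw [he]
      linarith
  set d := deriv H 1 with hd_def
  have hd : 0 < d := by
    rcases lt_or_eq_of_le (hH1nn 1 (by norm_num)) with h | h
    · exact h
    exfalso
    have hzero : ∀ t ∈ Set.Ici (1:ℝ), deriv H t ≤ 0 := by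
      intro t ht
      have h1t : (1:ℝ) ∈ Set.Ioi (0:ℝ) := by norm_num
      have htpos : t ∈ Set.Ioi (0:ℝ) := Set.mem_Ioi.mpr (lt_of_lt_of_le one_pos (Set.mem_Ici.mp ht))
      have hE := hE_anti h1t htpos ht
      simp only [Real.one_rpow, mul_one] at hE
      rw [← h] at hE
      have hpp : 0 < t ^ (2-m) := Real.rpow_pos_of_pos htpos _
      have he : deriv H t = (deriv H t * t ^ (2-m)) / (t ^ (2-m)) := by
        field_simp
      rw [he]
      exact div_nonpos_of_nonpos_of_nonneg hE hpp.le
    have hanti : AntitoneOn H (Set.Ici 1) := by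
      apply antitoneOn_of_deriv_nonpos (convex_Ici 1)
      · exact fun x hx =>
          (hHd x (Set.mem_Ioi.mpr (lt_of_lt_of_le one_pos (Set.mem_Ici.mp hx)))).continuousAt.continuousWithinAt
      · rw [interior_Ici]
        exact fun x hx =>
          (hHd x (Set.mem_Ioi.mpr (lt_trans one_pos (Set.mem_Ioi.mp hx)))).differentiableAt.differentiableWithinAt
      · rw [interior_Ici]
        exact fun x hx => hzero x (Set.mem_Ici.mpr (le_of_lt (Set.mem_Ioi.mp hx)))
    have h12 := hanti (self_mem_Ici) (by norm_num : (2:ℝ) ∈ Set.Ici 1) one_le_two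
    have h12' := hφ2 (by norm_num : (1:ℝ) ∈ Set.Ioi 0)
      (by norm_num : (2:ℝ) ∈ Set.Ioi 0) one_lt_two
    linarith
  -- lower bounds on deriv H
  have hb1 : ∀ t ∈ Set.Ioc (0:ℝ) 1, d * t ^ (m - 2) ≤ deriv H t := by
    intro t ht
    have h1 : (1:ℝ) ∈ Set.Ioi (0:ℝ) := Set.mem_Ioi.mpr one_pos
    have hE := hE_anti ht.1 h1 ht.2
    simp only [Real.one_rpow, mul_one] at hE
    have hp : (0:ℝ) < t ^ (m-2) := Real.rpow_pos_of_pos ht.1 _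
    have hcancel : t ^ (2-m) * t ^ (m-2) = 1 := by
      rw [← Real.rpow_add ht.1]; norm_num
    calc d * t^(m-2) ≤ (deriv H t * t^(2-m)) * t^(m-2) :=
          mul_le_mul_of_nonneg_right hE hp.le
      _ = deriv H t := by rw [mul_assoc, hcancel, mul_one]
  have hb2 : ∀ t ∈ Set.Ici (1:ℝ), d * t ^ (ℓ - 2) ≤ deriv H t := by
    intro t ht
    have h1 : (1:ℝ) ∈ Set.Ioi (0:ℝ) := Set.mem_Ioi.mpr one_pos
    have htpos : t ∈ Set.Ioi (0:ℝ) := Set.mem_Ioi.mpr (lt_of_lt_of_le one_pos (Set.mem_Ici.mp ht))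
    have hV := hV_mono h1 htpos ht
    simp only [Real.one_rpow, mul_one] at hV
    have hp : (0:ℝ) < t ^ (ℓ-2) := Real.rpow_pos_of_pos htpos _
    have hcancel : t ^ (2-ℓ) * t ^ (ℓ-2) = 1 := by
      rw [← Real.rpow_add htpos]; norm_num
    calc d * t^(ℓ-2) ≤ (deriv H t * t^(2-ℓ)) * t^(ℓ-2) :=
          mul_le_mul_of_nonneg_right hV hp.le
      _ = deriv H t := by rw [mul_assoc, hcancel, mul_one]
  -- lower bounds on H
  have hHnn : ∀ t : ℝ, 0 ≤ t → 0 ≤ H t := by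
    intro t ht
    rcases eq_or_lt_of_le ht with h | h
    · simp [hHdef, ← h]
    · exact le_of_lt (mul_pos h (hφ_pos t h))
  have hHlb0 : ∀ t ∈ Set.Ioc (0:ℝ) 1, d / (m - 1) * t ^ (m - 1) ≤ H t := by
    have hm1 : (0:ℝ) < m - 1 := by linarith
    have hρd : ∀ t ∈ Set.Ioi (0:ℝ), HasDerivAt (fun t => H t - d/(m-1) * t ^ (m-1))
        (deriv H t - d/(m-1) * ((m-1) * t ^ (m-1-1))) t := by
      intro t ht
      exact (hHd t ht).sub
        ((Real.hasDerivAt_rpow_const (Or.inl (ne_of_gt ht))).const_mul (d/(m-1)))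
    have hρmono : MonotoneOn (fun t => H t - d/(m-1) * t ^ (m-1)) (Set.Ioc 0 1) := by
      apply monotoneOn_of_deriv_nonneg (convex_Ioc 0 1)
      · exact fun x hx => (hρd x hx.1).continuousAt.continuousWithinAt
      · rw [interior_Ioc]
        exact fun x hx => (hρd x hx.1).differentiableAt.differentiableWithinAt
      · rw [interior_Ioc]
        intro x hx
        rw [(hρd x hx.1).deriv]
        have hb := hb1 x ⟨hx.1, hx.2.le⟩
        have he : d/(m-1) * ((m-1) * x ^ (m-1-1)) = d * x ^ (m-2) := by
          have hne : m - 1 ≠ 0 := ne_of_gt hm1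
          have e2 : m - 1 - 1 = m - 2 := by ring
          rw [e2]
          field_simp
        rw [he]
        linarith
    have hρlim : Tendsto (fun t => H t - d/(m-1) * t ^ (m-1))
        (nhdsWithin 0 (Set.Ioi 0)) (nhds 0) := by
      have hc : ContinuousAt (fun t:ℝ => t ^ (m-1)) 0 :=
        Real.continuousAt_rpow_const 0 (m-1) (Or.inr hm1.le)
      have h2 := (hc.tendsto).mono_left (nhdsWithin_le_nhds (s := Set.Ioi 0))
      rw [Real.zero_rpow (ne_of_gt hm1)] at h2
      have h3 := h2.const_mul (d/(m-1))
      rw [mul_zero] at h3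
      simpa using hφ1₀.sub h3
    intro t ht
    have hev : ∀ᶠ x in nhdsWithin 0 (Set.Ioi 0),
        H x - d/(m-1) * x ^ (m-1) ≤ H t - d/(m-1) * t ^ (m-1) := by
      filter_upwards [self_mem_nhdsWithin,
        nhdsWithin_le_nhds (Iio_mem_nhds ht.1)] with x hx1 hx2
      exact hρmono ⟨hx1, le_trans (le_of_lt hx2) ht.2⟩ ht (le_of_lt hx2)
    have := le_of_tendsto hρlim hev
    linarith
  have hHlb1 : ∀ t ∈ Set.Ici (1:ℝ), d / (ℓ - 1) * (t ^ (ℓ - 1) - 1) ≤ H t := by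
    have hℓ1 : (0:ℝ) < ℓ - 1 := by linarith
    have hσd : ∀ t ∈ Set.Ioi (0:ℝ),
        HasDerivAt (fun t => H t - H 1 - d/(ℓ-1) * (t ^ (ℓ-1) - 1))
        (deriv H t - d/(ℓ-1) * ((ℓ-1) * t ^ (ℓ-1-1))) t := by
      intro t ht
      have h1 := ((Real.hasDerivAt_rpow_const (x := t) (p := ℓ-1)
        (Or.inl (ne_of_gt ht))).sub_const 1).const_mul (d/(ℓ-1))
      exact ((hHd t ht).sub_const (H 1)).sub h1
    have hσmono : MonotoneOn (fun t => H t - H 1 - d/(ℓ-1) * (t ^ (ℓ-1) - 1))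
        (Set.Ici 1) := by
      apply monotoneOn_of_deriv_nonneg (convex_Ici 1)
      · exact fun x hx =>
          (hσd x (Set.mem_Ioi.mpr (lt_of_lt_of_le one_pos (Set.mem_Ici.mp hx)))).continuousAt.continuousWithinAt
      · rw [interior_Ici]
        exact fun x hx =>
          (hσd x (Set.mem_Ioi.mpr (lt_trans one_pos (Set.mem_Ioi.mp hx)))).differentiableAt.differentiableWithinAt
      · rw [interior_Ici]
        intro x hx
        rw [(hσd x (Set.mem_Ioi.mpr (lt_trans one_pos (Set.mem_Ioi.mp hx)))).deriv]
        have hb := hb2 x (Set.mem_Ici.mpr (le_of_lt (Set.mem_Ioi.mp hx)))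
        have he : d/(ℓ-1) * ((ℓ-1) * x ^ (ℓ-1-1)) = d * x ^ (ℓ-2) := by
          have hne : ℓ - 1 ≠ 0 := ne_of_gt hℓ1
          have e2 : ℓ - 1 - 1 = ℓ - 2 := by ring
          rw [e2]
          field_simp
        rw [he]
        linarith
    intro t ht
    have h0 := hσmono self_mem_Ici ht ht
    simp only [Real.one_rpow, sub_self, mul_zero, sub_zero] at h0
    have hH1' : 0 ≤ H 1 := hHnn 1 one_pos.le
    linarith
  -- continuity and integrability of H
  have hHcont : ContinuousOn H (Set.Ici 0) := by
    intro x hx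
    rcases eq_or_lt_of_le (Set.mem_Ici.mp hx) with h | h
    · rw [← h]
      have hIci : Set.Ici (0:ℝ) = insert 0 (Set.Ioi 0) := (Set.Ioi_insert (a:=(0:ℝ))).symm
      unfold ContinuousWithinAt
      rw [hIci, nhdsWithin_insert]
      have hH0 : H 0 = 0 := by simp [hHdef]
      rw [hH0]
      rw [tendsto_sup]
      constructor
      · have := tendsto_pure_nhds H 0
        rwa [hH0] at this
      · exact hφ1₀
    · exact ((hH2.continuousOn).continuousAt (isOpen_Ioi.mem_nhds h)).continuousWithinAt
  have hHint : ∀ a b : ℝ, 0 ≤ a → a ≤ b → IntervalIntegrable H volume a b := by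
    intro a b ha hab
    apply (hHcont.mono _).intervalIntegrable
    rw [uIcc_of_le hab]
    exact fun x hx => le_trans ha hx.1
  have hPhi_eq : ∀ a b : ℝ, 0 ≤ a → a ≤ b → Phi φ b = Phi φ a + ∫ s in a..b, H s := by
    intro a b ha hab
    rw [Phi, Phi]
    exact (intervalIntegral.integral_add_adjacent_intervals
      (hHint 0 a le_rfl ha) (hHint a b ha hab)).symm
  have hPhi_mono : MonotoneOn (Phi φ) (Set.Ici 0) := by
    intro a ha b hb hab
    rw [hPhi_eq a b ha hab]
    have : 0 ≤ ∫ s in a..b, H s :=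
      intervalIntegral.integral_nonneg hab (fun u hu => hHnn u (le_trans ha hu.1))
    linarith
  have hPhi_nonneg : ∀ t : ℝ, 0 ≤ t → 0 ≤ Phi φ t := by
    intro t ht
    have := hPhi_mono (self_mem_Ici) ht ht
    simpa [Phi] using this
  -- lower bounds on Phi
  have hPhi_lb0 : ∀ t ∈ Set.Ioc (0:ℝ) 1, d / (m - 1) / m * t ^ m ≤ Phi φ t := by
    intro t ht
    have hm1 : (0:ℝ) < m - 1 := by linarith
    have hint1 : IntervalIntegrable (fun s => d/(m-1) * s ^ (m-1)) volume 0 t :=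
      (intervalIntegral.intervalIntegrable_rpow' (by linarith)).const_mul _
    have hle : ∀ s ∈ Set.Icc (0:ℝ) t, d/(m-1) * s^(m-1) ≤ H s := by
      intro s hs
      rcases eq_or_lt_of_le hs.1 with h | h
      · rw [← h, Real.zero_rpow (by linarith : m - 1 ≠ 0)]
        simp [hHdef]
      · exact hHlb0 s ⟨h, le_trans hs.2 ht.2⟩
    have hmono := intervalIntegral.integral_mono_on ht.1.le hint1
      (hHint 0 t le_rfl ht.1.le) hle
    calc d/(m-1)/m * t^m = (∫ s in (0:ℝ)..t, d/(m-1) * s^(m-1)) := by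
          rw [intervalIntegral.integral_const_mul, integral_rpow (Or.inl (by linarith)),
            show m - 1 + 1 = m by ring, Real.zero_rpow (ne_of_gt hm0)]
          ring
      _ ≤ ∫ s in (0:ℝ)..t, H s := hmono
      _ = Phi φ t := by simp [Phi, hHdef]
  set T₀ : ℝ := (2:ℝ) ^ (1/(ℓ-1)) with hT₀def
  have hT₀1 : 1 ≤ T₀ := by
    have hl1 : 0 < ℓ - 1 := by linarith
    exact Real.one_le_rpow one_le_two (by positivity)
  set T₂ : ℝ := (2:ℝ) ^ (1/ℓ) * T₀ with hT₂def
  have hT₂pos : 0 < T₂ := by positivity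
  have hT₂T₀ : T₀ ≤ T₂ := by
    have h1 : (1:ℝ) ≤ (2:ℝ) ^ (1/ℓ) :=
      Real.one_le_rpow one_le_two (le_of_lt (by positivity : (0:ℝ) < 1/ℓ))
    rw [hT₂def]
    exact le_mul_of_one_le_left (le_trans zero_le_one hT₀1) h1
  set c₃ : ℝ := d / (ℓ - 1) / 2 / (2 * ℓ) with hc₃def
  have hc₃ : 0 < c₃ := by
    have h1 : (0:ℝ) < ℓ - 1 := by linarith
    positivity
  have hPhi_lb2 : ∀ t : ℝ, T₂ ≤ t → c₃ * t ^ ℓ ≤ Phi φ t := by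
    intro t htt
    have hT₀pos : (0:ℝ) < T₀ := lt_of_lt_of_le one_pos hT₀1
    have htpos : (0:ℝ) < t := lt_of_lt_of_le hT₂pos htt
    have hT₀t : T₀ ≤ t := le_trans hT₂T₀ htt
    have hsplit := hPhi_eq T₀ t hT₀pos.le hT₀t
    have hℓ1 : (0:ℝ) < ℓ - 1 := by linarith
    have hc₂pos : (0:ℝ) < d / (ℓ-1) / 2 := by positivity
    have hHlb2 : ∀ s ∈ Set.Icc T₀ t, d/(ℓ-1)/2 * s ^ (ℓ-1) ≤ H s := by
      intro s hs
      have hs1 : (1:ℝ) ≤ s := le_trans hT₀1 hs.1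
      have hlb := hHlb1 s hs1
      have h2 : (2:ℝ) ≤ s ^ (ℓ-1) := by
        have hT : T₀ ^ (ℓ-1) = 2 := by
          rw [hT₀def, ← Real.rpow_mul (by norm_num : (0:ℝ) ≤ 2),
            one_div_mul_cancel (ne_of_gt hℓ1), Real.rpow_one]
        calc (2:ℝ) = T₀ ^ (ℓ-1) := hT.symm
          _ ≤ s ^ (ℓ-1) := Real.rpow_le_rpow hT₀pos.le hs.1 hℓ1.le
      have hdl : (0:ℝ) < d / (ℓ-1) := by positivity
      have h4 : 0 ≤ (d/(ℓ-1)) * (s^(ℓ-1)/2 - 1) := mul_nonneg hdl.le (by linarith)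
      have h5 : d/(ℓ-1)/2 * s^(ℓ-1)
          = d/(ℓ-1)*(s^(ℓ-1)-1) - (d/(ℓ-1))*(s^(ℓ-1)/2 - 1) := by ring
      linarith
    have hint1 : IntervalIntegrable (fun s => d/(ℓ-1)/2 * s ^ (ℓ-1)) volume T₀ t :=
      (intervalIntegral.intervalIntegrable_rpow' (by linarith)).const_mul _
    have hmono := intervalIntegral.integral_mono_on hT₀t hint1
      (hHint T₀ t hT₀pos.le hT₀t) hHlb2
    have heval : (∫ s in T₀..t, d/(ℓ-1)/2 * s^(ℓ-1)) = d/(ℓ-1)/2 * (t^ℓ - T₀^ℓ) / ℓ := by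
      rw [intervalIntegral.integral_const_mul, integral_rpow (Or.inl (by linarith)),
        show ℓ - 1 + 1 = ℓ by ring]
      ring
    have hhalf : 2 * T₀^ℓ ≤ t^ℓ := by
      have h1 : ((2:ℝ)^(1/ℓ) * T₀)^ℓ ≤ t^ℓ := by
        apply Real.rpow_le_rpow (by positivity) _ hℓ0.le
        rw [← hT₂def]; exact htt
      rw [Real.mul_rpow (by positivity) hT₀pos.le,
        ← Real.rpow_mul (by norm_num : (0:ℝ) ≤ 2),
        one_div_mul_cancel (ne_of_gt hℓ0), Real.rpow_one] at h1
      exact h1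
    have hPhiT₀ : 0 ≤ Phi φ T₀ := hPhi_nonneg T₀ hT₀pos.le
    have hstep : d/(ℓ-1)/2 * (t^ℓ/2) / ℓ ≤ d/(ℓ-1)/2 * (t^ℓ - T₀^ℓ) / ℓ := by
      have hx : t^ℓ/2 ≤ t^ℓ - T₀^ℓ := by linarith
      gcongr
    rw [hsplit]
    calc c₃ * t^ℓ = d/(ℓ-1)/2 * (t^ℓ/2) / ℓ := by rw [hc₃def]; ring
      _ ≤ d/(ℓ-1)/2 * (t^ℓ - T₀^ℓ) / ℓ := hstep
      _ = ∫ s in T₀..t, d/(ℓ-1)/2 * s^(ℓ-1) := heval.symm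
      _ ≤ ∫ s in T₀..t, H s := hmono
      _ ≤ Phi φ T₀ + ∫ s in T₀..t, H s := by linarith
  -- the key upper bound for Phinv
  have hPhi1pos : 0 < Phi φ 1 := by
    have h := hPhi_lb0 1 ⟨one_pos, le_rfl⟩
    rw [Real.one_rpow, mul_one] at h
    have hm1 : (0:ℝ) < m - 1 := by linarith
    have : (0:ℝ) < d / (m-1) / m := by positivity
    linarith
  have hKey : ∃ A B : ℝ, 0 < A ∧ 0 < B ∧
      ∀ t : ℝ, 0 ≤ t → t ≤ A * (Phi φ t) ^ (1/m) + B * (Phi φ t) ^ (1/ℓ) := by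
    set k₀ : ℝ := d / (m-1) / m with hk₀def
    have hm1 : (0:ℝ) < m - 1 := by linarith
    have hk₀pos : 0 < k₀ := by rw [hk₀def]; positivity
    set A := (1/k₀) ^ (1/m) with hAdef
    set B := max ((1/c₃) ^ (1/ℓ)) (T₂ / (Phi φ 1) ^ (1/ℓ)) with hBdef
    have hApos : (0:ℝ) < A := by rw [hAdef]; positivity
    have hBpos : (0:ℝ) < B := by
      rw [hBdef]; apply lt_max_of_lt_left; positivity
    refine ⟨A, B, hApos, hBpos, ?_⟩
    intro t ht
    have hPhit : 0 ≤ Phi φ t := hPhi_nonneg t ht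
    have hterm1 : 0 ≤ A * (Phi φ t) ^ (1/m) :=
      mul_nonneg hApos.le (Real.rpow_nonneg hPhit _)
    have hterm2 : 0 ≤ B * (Phi φ t) ^ (1/ℓ) :=
      mul_nonneg hBpos.le (Real.rpow_nonneg hPhit _)
    rcases eq_or_lt_of_le ht with h0 | htpos
    · rw [← h0] at hterm1 hterm2 ⊢; linarith
    rcases le_total t 1 with h1 | h1
    · -- small t
      have hk := hPhi_lb0 t ⟨htpos, h1⟩
      have hstep : t ^ m ≤ (1/k₀) * Phi φ t := by
        rw [div_mul_eq_mul_div, one_mul, le_div_iff₀ hk₀pos]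
        calc t ^ m * k₀ = k₀ * t ^ m := by ring
          _ ≤ Phi φ t := hk
      have ht_eq : (t ^ m) ^ (1/m) = t := by
        rw [← Real.rpow_mul htpos.le, mul_one_div, div_self (ne_of_gt hm0), Real.rpow_one]
      have hfin : t ≤ A * (Phi φ t) ^ (1/m) := by
        calc t = (t^m)^(1/m) := ht_eq.symm
          _ ≤ ((1/k₀) * Phi φ t)^(1/m) :=
              Real.rpow_le_rpow (Real.rpow_nonneg htpos.le m) hstep (by positivity)
          _ = A * (Phi φ t)^(1/m) := by
              have hk' : (0:ℝ) ≤ 1/k₀ := by positivity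
              rw [Real.mul_rpow hk' hPhit]
      linarith
    rcases le_total t T₂ with h2 | h2
    · -- middle t
      have hmono2 := hPhi_mono (Set.mem_Ici.mpr (zero_le_one)) (Set.mem_Ici.mpr ht) h1
      have hP1 : (0:ℝ) < (Phi φ 1)^(1/ℓ) := Real.rpow_pos_of_pos hPhi1pos _
      have hle : (Phi φ 1)^(1/ℓ) ≤ (Phi φ t)^(1/ℓ) :=
        Real.rpow_le_rpow hPhi1pos.le hmono2 (by positivity)
      have hfin : t ≤ B * (Phi φ t) ^ (1/ℓ) := by
        calc t ≤ T₂ := h2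
          _ = (T₂ / (Phi φ 1)^(1/ℓ)) * (Phi φ 1)^(1/ℓ) :=
              (div_mul_cancel₀ _ (ne_of_gt hP1)).symm
          _ ≤ B * (Phi φ t)^(1/ℓ) := by
              have hBle : T₂ / (Phi φ 1)^(1/ℓ) ≤ B := by
                rw [hBdef]; exact le_max_right _ _
              exact mul_le_mul hBle hle hP1.le hBpos.le
      linarith
    · -- large t
      have hk := hPhi_lb2 t h2
      have hstep : t ^ ℓ ≤ (1/c₃) * Phi φ t := by
        rw [div_mul_eq_mul_div, one_mul, le_div_iff₀ hc₃]
        calc t ^ ℓ * c₃ = c₃ * t ^ ℓ := by ring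
          _ ≤ Phi φ t := hk
      have ht_eq : (t ^ ℓ) ^ (1/ℓ) = t := by
        rw [← Real.rpow_mul htpos.le, mul_one_div, div_self (ne_of_gt hℓ0), Real.rpow_one]
      have hfin : t ≤ B * (Phi φ t) ^ (1/ℓ) := by
        calc t = (t^ℓ)^(1/ℓ) := ht_eq.symm
          _ ≤ ((1/c₃) * Phi φ t)^(1/ℓ) :=
              Real.rpow_le_rpow (Real.rpow_nonneg htpos.le ℓ) hstep (by positivity)
          _ = (1/c₃)^(1/ℓ) * (Phi φ t)^(1/ℓ) := by
              have hc' : (0:ℝ) ≤ 1/c₃ := by positivity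
              rw [Real.mul_rpow hc' hPhit]
          _ ≤ B * (Phi φ t)^(1/ℓ) := by
              have hBle : (1/c₃)^(1/ℓ) ≤ B := by
                rw [hBdef]; exact le_max_left _ _
              exact mul_le_mul_of_nonneg_right hBle (Real.rpow_nonneg hPhit _)
      linarith
  obtain ⟨A, B, hA, hB, hAB⟩ := hKey
  have hPhinv_ub : ∀ s : ℝ, 0 ≤ s → Phinv s ≤ A * s ^ (1/m) + B * s ^ (1/ℓ) := by
    intro s hs
    obtain ⟨h1, h2⟩ := hPhinv s hs
    have := hAB (Phinv s) h1
    rwa [h2] at this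
  -- exponents
  set β : ℝ := 1/m + (-(N+1)/N) with hβdef
  set γ : ℝ := 1/ℓ + (-(N+1)/N) with hγdef
  have hβ : -1 < β := by
    rw [hβdef]
    have : 1/N < 1/m := by
      apply one_div_lt_one_div_of_lt hm0 hN
    have hN' : -(N+1)/N = -1 - 1/N := by field_simp; ring
    rw [hN']; linarith
  have hγ : -1 < γ := by
    rw [hγdef]
    have : 1/N < 1/ℓ := by
      apply one_div_lt_one_div_of_lt hℓ0 hℓN
    have hN' : -(N+1)/N = -1 - 1/N := by field_simp; ring
    rw [hN']; linarith
  have hβγ : β ≤ γ := by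
    have : 1/m ≤ 1/ℓ := one_div_le_one_div_of_le hℓ0 hℓm
    rw [hβdef, hγdef]; linarith
  have hγ1 : γ + 1 = 1/ℓ - 1/N := by
    rw [hγdef]; field_simp; ring
  -- monotonicity of Phinv
  have hPhinv_mono : MonotoneOn Phinv (Set.Ici 0) := by
    intro a ha b hb hab
    by_contra hcon
    push_neg at hcon
    have h1 := (hPhinv a ha).1
    have h2 := (hPhinv b hb).1
    have := hPhi_mono h2 h1 (le_of_lt hcon)
    rw [(hPhinv a ha).2, (hPhinv b hb).2] at this
    have : a = b := le_antisymm hab this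
    rw [this] at hcon
    exact lt_irrefl _ hcon
  -- sobG upper bound
  have hβ1pos : (0:ℝ) < β + 1 := by linarith
  have hγ1pos : (0:ℝ) < γ + 1 := by linarith
  have h1m1 : 1/m < 1 := by rw [div_lt_one hm0]; exact hm
  have h1ℓ1 : 1/ℓ < 1 := by rw [div_lt_one hℓ0]; exact hℓ
  have hNsplit : -(N+1)/N = -1 - 1/N := by field_simp; ring
  have h1Npos : (0:ℝ) < 1/N := by positivity
  have hβneg : β < 0 := by rw [hβdef, hNsplit]; linarith
  have hγneg : γ < 0 := by rw [hγdef, hNsplit]; linarith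
  have hβ'ne : -(N+1)/N ≠ 0 := ne_of_lt (by rw [hNsplit]; linarith)
  have hsobG_ub : ∀ x : ℝ, 0 ≤ x →
      sobG Phinv N x ≤ A/(β+1) * x ^ (β+1) + B/(γ+1) * x ^ (γ+1) := by
    intro x hx
    have hβA : IntervalIntegrable (fun s:ℝ => A * s ^ β) volume 0 x :=
      (intervalIntegral.intervalIntegrable_rpow' hβ).const_mul _
    have hγB : IntervalIntegrable (fun s:ℝ => B * s ^ γ) volume 0 x :=
      (intervalIntegral.intervalIntegrable_rpow' hγ).const_mul _
    have hgint : IntervalIntegrable (fun s:ℝ => A * s ^ β + B * s ^ γ) volume 0 x :=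
      hβA.add hγB
    have hfg : ∀ s ∈ Set.Icc (0:ℝ) x,
        Phinv s * s ^ (-(N+1)/N) ≤ A * s ^ β + B * s ^ γ := by
      intro s hs
      rcases eq_or_lt_of_le hs.1 with h | h
      · rw [← h, Real.zero_rpow hβ'ne, Real.zero_rpow (ne_of_lt hβneg),
          Real.zero_rpow (ne_of_lt hγneg)]
        simp
      · have hub := hPhinv_ub s h.le
        have hsp : (0:ℝ) ≤ s ^ (-(N+1)/N) := Real.rpow_nonneg h.le _
        calc Phinv s * s ^ (-(N+1)/N)
            ≤ (A * s^(1/m) + B * s^(1/ℓ)) * s ^ (-(N+1)/N) :=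
              mul_le_mul_of_nonneg_right hub hsp
          _ = A * s ^ β + B * s ^ γ := by
              rw [hβdef, hγdef, add_mul, mul_assoc, mul_assoc,
                ← Real.rpow_add h, ← Real.rpow_add h]
    have hPm : Measurable (fun s => Phinv (max s 0)) := by
      apply Monotone.measurable
      intro a b hab
      exact hPhinv_mono (Set.mem_Ici.mpr (le_max_right a 0))
        (Set.mem_Ici.mpr (le_max_right b 0)) (max_le_max hab le_rfl)
    have hfm : AEStronglyMeasurable (fun s => Phinv s * s ^ (-(N+1)/N))
        (volume.restrict (Set.uIoc (0:ℝ) x)) := by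
      rw [Set.uIoc_of_le hx]
      have hcont : ContinuousOn (fun s:ℝ => s ^ (-(N+1)/N)) (Set.Ioc 0 x) := by
        intro s hs
        exact (Real.continuousAt_rpow_const s _ (Or.inl (ne_of_gt hs.1))).continuousWithinAt
      have h2 : AEMeasurable (fun s:ℝ => s ^ (-(N+1)/N)) (volume.restrict (Set.Ioc 0 x)) :=
        hcont.aemeasurable measurableSet_Ioc
      have h1 : AEMeasurable (fun s => Phinv (max s 0)) (volume.restrict (Set.Ioc 0 x)) :=
        hPm.aemeasurable
      apply ((h1.mul h2).aestronglyMeasurable).congr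
      filter_upwards [ae_restrict_mem measurableSet_Ioc] with s hs
      simp only [Pi.mul_apply]
      rw [max_eq_left hs.1.le]
    have hfint : IntervalIntegrable (fun s => Phinv s * s ^ (-(N+1)/N)) volume 0 x := by
      apply hgint.mono_fun' hfm
      rw [Set.uIoc_of_le hx]
      filter_upwards [ae_restrict_mem measurableSet_Ioc] with s hs
      have hnn : 0 ≤ Phinv s * s ^ (-(N+1)/N) :=
        mul_nonneg (hPhinv s (Set.mem_Ici.mpr hs.1.le)).1 (Real.rpow_nonneg hs.1.le _)
      rw [Real.norm_of_nonneg hnn]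
      exact hfg s ⟨hs.1.le, hs.2⟩
    have hmono := intervalIntegral.integral_mono_on hx hfint hgint hfg
    have heval : (∫ s in (0:ℝ)..x, (A * s ^ β + B * s ^ γ))
        = A/(β+1) * x^(β+1) + B/(γ+1) * x^(γ+1) := by
      rw [intervalIntegral.integral_add hβA hγB, intervalIntegral.integral_const_mul,
        intervalIntegral.integral_const_mul, integral_rpow (Or.inl hβ),
        integral_rpow (Or.inl hγ), Real.zero_rpow (ne_of_gt hβ1pos),
        Real.zero_rpow (ne_of_gt hγ1pos)]
      ring
    calc sobG Phinv N x = ∫ s in (0:ℝ)..x, Phinv s * s ^ (-(N+1)/N) := rfl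
      _ ≤ ∫ s in (0:ℝ)..x, (A * s ^ β + B * s ^ γ) := hmono
      _ = A/(β+1) * x^(β+1) + B/(γ+1) * x^(γ+1) := heval
  -- final assembly
  set A' := A/(β+1) with hA'def
  set B' := B/(γ+1) with hB'def
  have hA' : (0:ℝ) < A' := by rw [hA'def]; positivity
  have hB' : (0:ℝ) < B' := by rw [hB'def]; positivity
  set C := A' + B' with hCdef
  have hC : (0:ℝ) < C := by rw [hCdef]; positivity
  have hX : ∀ t : ℝ, 0 ≤ t → t ≤ C + C * (Phistar t) ^ (γ+1) := by
    intro t ht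
    obtain ⟨hX0, hXG⟩ := hPhistar t (Set.mem_Ici.mpr ht)
    have hub := hsobG_ub (Phistar t) hX0
    rw [hXG] at hub
    have hpow : (Phistar t) ^ (β+1) ≤ 1 + (Phistar t) ^ (γ+1) := by
      rcases le_total (Phistar t) 1 with h1 | h1
      · have hle1 := Real.rpow_le_one hX0 h1 hβ1pos.le
        have h2 : 0 ≤ (Phistar t) ^ (γ+1) := Real.rpow_nonneg hX0 _
        linarith
      · have hle1 := Real.rpow_le_rpow_of_exponent_le h1 (by linarith : β+1 ≤ γ+1)
        linarith
    have h2 : 0 ≤ (Phistar t) ^ (γ+1) := Real.rpow_nonneg hX0 _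
    have e1 : A' * (Phistar t)^(β+1) ≤ A' * (1 + (Phistar t)^(γ+1)) :=
      mul_le_mul_of_nonneg_left hpow hA'.le
    have e3 : C * (Phistar t)^(γ+1)
        = A' * (Phistar t)^(γ+1) + B' * (Phistar t)^(γ+1) := by rw [hCdef]; ring
    have e4 : A' * (1 + (Phistar t)^(γ+1)) = A' + A' * (Phistar t)^(γ+1) := by ring
    have e5 : 0 ≤ B' * (Phistar t)^(γ+1) := mul_nonneg hB'.le h2
    linarith
  have hδl : (γ+1) * lstar = 1 := by
    rw [hγ1, hlstar]
    have hNl : N - ℓ ≠ 0 := by intro hcon; linarith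
    field_simp
    try ring
  have hlstar_pos : (0:ℝ) < lstar := by
    rw [hlstar]
    have hNl : (0:ℝ) < N - ℓ := by linarith
    positivity
  have hXlb : ∀ t : ℝ, 2*C ≤ t → (t/(2*C)) ^ lstar ≤ Phistar t := by
    intro t ht2C
    have ht0 : (0:ℝ) ≤ t := le_trans (by positivity) ht2C
    obtain ⟨hX0, _⟩ := hPhistar t (Set.mem_Ici.mpr ht0)
    have h1 := hX t ht0
    have hXδ : t/(2*C) ≤ (Phistar t) ^ (γ+1) := by
      rw [div_le_iff₀ (by positivity)]
      have e : (Phistar t)^(γ+1) * (2*C) = 2*(C*(Phistar t)^(γ+1)) := by ring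
      rw [e]
      linarith
    calc (t/(2*C)) ^ lstar ≤ ((Phistar t)^(γ+1)) ^ lstar :=
          Real.rpow_le_rpow (div_nonneg ht0 (by positivity)) hXδ hlstar_pos.le
      _ = Phistar t := by
          rw [← Real.rpow_mul hX0, hδl, Real.rpow_one]
  have hupper : ∀ᶠ t in atTop,
      (lam*t)^r / Phistar t ≤ (lam^r * (2*C)^lstar) * t^(r - lstar) := by
    filter_upwards [eventually_ge_atTop (max (2*C) 1)] with t ht
    have ht1 : (1:ℝ) ≤ t := le_trans (le_max_right _ _) ht
    have ht2C : 2*C ≤ t := le_trans (le_max_left _ _) ht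
    have htpos : (0:ℝ) < t := lt_of_lt_of_le one_pos ht1
    have hXlb' := hXlb t ht2C
    have hden_pos : (0:ℝ) < (t/(2*C)) ^ lstar :=
      Real.rpow_pos_of_pos (div_pos htpos (by positivity)) _
    have hXpos : (0:ℝ) < Phistar t := lt_of_lt_of_le hden_pos hXlb'
    have hnum_nonneg : (0:ℝ) ≤ (lam*t)^r := Real.rpow_nonneg (by positivity) r
    have hstep1 : (lam*t)^r / Phistar t ≤ (lam*t)^r / ((t/(2*C))^lstar) :=
      div_le_div_of_nonneg_left hnum_nonneg hden_pos hXlb'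
    have heq : (lam*t)^r / ((t/(2*C))^lstar) = (lam^r * (2*C)^lstar) * t^(r - lstar) := by
      rw [Real.mul_rpow hlam.le htpos.le,
        Real.div_rpow htpos.le (by positivity : (0:ℝ) ≤ 2*C), Real.rpow_sub htpos]
      have h2C : (0:ℝ) < (2*C)^lstar := Real.rpow_pos_of_pos (by positivity) _
      have htl : (0:ℝ) < t^lstar := Real.rpow_pos_of_pos htpos _
      field_simp
    rw [heq] at hstep1
    exact hstep1
  have hlower : ∀ᶠ t in atTop, 0 ≤ (lam*t)^r / Phistar t := by
    filter_upwards [eventually_ge_atTop (0:ℝ)] with t ht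
    exact div_nonneg (Real.rpow_nonneg (mul_nonneg hlam.le ht) r)
      (hPhistar t (Set.mem_Ici.mpr ht)).1
  have htend : Tendsto (fun t:ℝ => (lam^r * (2*C)^lstar) * t^(r - lstar)) atTop (nhds 0) := by
    have h0 : Tendsto (fun t:ℝ => t^(r-lstar)) atTop (nhds 0) := by
      have h1 := tendsto_rpow_neg_atTop (by linarith : (0:ℝ) < lstar - r)
      simpa [neg_sub] using h1
    have h2 := h0.const_mul (lam^r * (2*C)^lstar)
    simpa using h2
  exact tendsto_of_tendsto_of_tendsto_of_le_of_le' tendsto_const_nhds htend hlower hupper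
end
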